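/- arXiv:1803.02679 — 13 statements merged into one kernel-verified Lean document; each statement's English description precedes it below -/
import Mathlib

section
/- Theorem 3.1: The inner product is zero for two states with different level; that is, if L₁ and L₂ are lists over Fin r with L₁.length ≠ L₂.length, then ⟪v(L₁), v(L₂)⟫ = 0. -/
theorem stmt0 {r : ℕ} (A : Fin r → Fin r → ℤ) (hA : ∀ i, A i i = 2)
    {V : Type*} [NormedAddCommGroup V] [InnerProductSpace ℂ V]
    (Ep Em H : Fin r → (V →ₗ[ℂ] V))
    (hEpEm : ∀ i j, Ep i ∘ₗ Em j - Em j ∘ₗ Ep i = if i = j then H i else 0)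
    (hHEp : ∀ i j, H i ∘ₗ Ep j - Ep j ∘ₗ H i = (A j i : ℂ) • Ep j)
    (hHEm : ∀ i j, H i ∘ₗ Em j - Em j ∘ₗ H i = (-(A j i) : ℂ) • Em j)
    (hHH : ∀ i j, H i ∘ₗ H j - H j ∘ₗ H i = 0)
    (hadj : ∀ i (x y : V), (inner ℂ (Ep i x) y : ℂ) = inner ℂ x (Em i y))
    (lam : Fin r → ℤ) (Λ : V)
    (hΛnorm : (inner ℂ Λ Λ : ℂ) = 1)
    (hEpΛ : ∀ i, Ep i Λ = 0)
    (hHΛ : ∀ i, H i Λ = (lam i : ℂ) • Λ)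
    (L₁ L₂ : List (Fin r)) (hlen : L₁.length ≠ L₂.length) :
    (inner ℂ (L₁.foldr (fun j y => Em j y) Λ) (L₂.foldr (fun j y => Em j y) Λ) : ℂ) = 0 := by
  classical
  set v : List (Fin r) → V := fun L => L.foldr (fun j y => Em j y) Λ with hv
  have hvnil : v [] = Λ := rfl
  have hvcons : ∀ (j : Fin r) (T : List (Fin r)), v (j :: T) = Em j (v T) := fun _ _ => rfl
  set S : ℕ → Set V := fun m => {w | ∃ L' : List (Fin r), L'.length = m ∧ v L' = w} with hS
  -- weight lemma
  have hw : ∀ (L : List (Fin r)) (i : Fin r), ∃ c : ℂ, H i (v L) = c • v L := by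
    intro L i
    induction L with
    | nil => exact ⟨(lam i : ℂ), hHΛ i⟩
    | cons j T ih =>
      obtain ⟨c, hc⟩ := ih
      refine ⟨c + (-(A j i) : ℂ), ?_⟩
      have h := LinearMap.congr_fun (hHEm i j) (v T)
      simp only [LinearMap.sub_apply, LinearMap.comp_apply, LinearMap.smul_apply] at h
      have h3 : H i ((Em j) (v T)) = Em j (H i (v T)) + (-(A j i) : ℂ) • Em j (v T) := by
        rw [← h]; abel
      rw [hvcons, h3, hc, map_smul, add_smul]
  -- lowering lemma
  have hE : ∀ (L : List (Fin r)) (i : Fin r),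
      Ep i (v L) ∈ Submodule.span ℂ (S (L.length - 1)) := by
    intro L i
    induction L with
    | nil =>
      rw [hvnil, hEpΛ i]
      exact Submodule.zero_mem _
    | cons j T ih =>
      have h := LinearMap.congr_fun (hEpEm i j) (v T)
      simp only [LinearMap.sub_apply, LinearMap.comp_apply] at h
      have h2 : (if i = j then H i else 0) (v T) = (if i = j then H i (v T) else 0) := by
        split <;> simp
      have heq : Ep i (v (j :: T)) = Em j (Ep i (v T)) + (if i = j then H i (v T) else 0) := by
        rw [hvcons, ← h2, ← h]; abel
      rw [heq]
      simp only [List.length_cons, Nat.add_sub_cancel]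
      apply Submodule.add_mem
      · cases T with
        | nil =>
          rw [hvnil, hEpΛ i, map_zero]
          exact Submodule.zero_mem _
        | cons k T' =>
          have h1 := Submodule.apply_mem_span_image_of_mem_span (Em j) ih
          refine Submodule.span_mono ?_ h1
          rintro w ⟨u, ⟨L', hL', rfl⟩, rfl⟩
          refine ⟨j :: L', ?_, (hvcons j L').symm⟩
          simp only [List.length_cons] at hL' ⊢
          omega
      · split
        · obtain ⟨c, hc⟩ := hw T i
          rw [hc]
          exact Submodule.smul_mem _ _ (Submodule.subset_span ⟨T, rfl, rfl⟩)
        · exact Submodule.zero_mem _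
  -- main induction
  have main : ∀ (L₂ : List (Fin r)) (m : ℕ), m ≠ L₂.length →
      ∀ x ∈ Submodule.span ℂ (S m), (inner ℂ x (v L₂) : ℂ) = 0 := by
    intro L₂
    induction L₂ with
    | nil =>
      intro m hm x hx
      refine Submodule.span_induction ?_ ?_ ?_ ?_ hx
      · rintro w ⟨L', hL', rfl⟩
        cases L' with
        | nil => exact absurd hL'.symm hm
        | cons j T =>
          rw [hvcons, hvnil]
          have h0 : (inner ℂ Λ (Em j (v T)) : ℂ) = 0 := by
            rw [← hadj j Λ (v T), hEpΛ j, inner_zero_left]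
          rw [← inner_conj_symm, h0, map_zero]
      · simp
      · intro a b _ _ ha hb; rw [inner_add_left, ha, hb, add_zero]
      · intro c a _ ha; rw [inner_smul_left, ha, mul_zero]
    | cons j T ih =>
      intro m hm x hx
      refine Submodule.span_induction ?_ ?_ ?_ ?_ hx
      · rintro w ⟨L', hL', rfl⟩
        rw [hvcons, ← hadj j (v L') (v T)]
        cases L' with
        | nil =>
          rw [hvnil, hEpΛ j, inner_zero_left]
        | cons k T' =>
          have hmem := hE (k :: T') j
          simp only [List.length_cons, Nat.add_sub_cancel] at hmem
          have hne : T'.length ≠ T.length := by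
            simp only [List.length_cons] at hL' hm
            omega
          exact ih _ hne _ hmem
      · simp
      · intro a b _ _ ha hb; rw [inner_add_left, ha, hb, add_zero]
      · intro c a _ ha; rw [inner_smul_left, ha, mul_zero]
  exact main L₂ L₁.length hlen _ (Submodule.subset_span ⟨L₁, rfl, rfl⟩)
end

section
/- Theorem 3.2: The inner product is zero for different states with the same level; that is, if L₁ and L₂ are lists over Fin r of equal length whose underlying multisets of entries are different, then ⟪v(L₁), v(L₂)⟫ = 0. -/
section Aux

variable {r : ℕ} {V : Type*} [NormedAddCommGroup V] [InnerProductSpace ℂ V]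

/-- the vector built from a list -/
def vL (Em : Fin r → (V →ₗ[ℂ] V)) (Λ : V) (L : List (Fin r)) : V :=
  L.foldr (fun j y => Em j y) Λ

lemma H_vL (Em H : Fin r → (V →ₗ[ℂ] V)) (A : Fin r → Fin r → ℤ) (lam : Fin r → ℤ) (Λ : V)
    (hHEm : ∀ i j, H i ∘ₗ Em j - Em j ∘ₗ H i = (-(A j i) : ℂ) • Em j)
    (hHΛ : ∀ i, H i Λ = (lam i : ℂ) • Λ) (i : Fin r) (L : List (Fin r)) :
    ∃ c : ℂ, H i (vL Em Λ L) = c • vL Em Λ L := by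
  induction L with
  | nil => exact ⟨(lam i : ℂ), hHΛ i⟩
  | cons j L ih =>
    obtain ⟨c, hc⟩ := ih
    refine ⟨(-(A j i) : ℂ) + c, ?_⟩
    have h := congrArg (fun f => f (vL Em Λ L)) (hHEm i j)
    simp only [LinearMap.sub_apply, LinearMap.comp_apply, LinearMap.smul_apply] at h
    have hcons : vL Em Λ (j :: L) = Em j (vL Em Λ L) := rfl
    rw [hcons]
    have h2 : H i (Em j (vL Em Λ L)) =
        (-(A j i) : ℂ) • Em j (vL Em Λ L) + Em j (H i (vL Em Λ L)) :=
      eq_add_of_sub_eq h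
    rw [h2, hc, map_smul, add_smul]

lemma Ep_vL_span (Ep Em H : Fin r → (V →ₗ[ℂ] V)) (A : Fin r → Fin r → ℤ) (lam : Fin r → ℤ)
    (Λ : V)
    (hEpEm : ∀ i j, Ep i ∘ₗ Em j - Em j ∘ₗ Ep i = if i = j then H i else 0)
    (hHEm : ∀ i j, H i ∘ₗ Em j - Em j ∘ₗ H i = (-(A j i) : ℂ) • Em j)
    (hEpΛ : ∀ i, Ep i Λ = 0)
    (hHΛ : ∀ i, H i Λ = (lam i : ℂ) • Λ) (i : Fin r) (L : List (Fin r)) :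
    Ep i (vL Em Λ L) ∈ Submodule.span ℂ
      {v : V | ∃ L' : List (Fin r), L'.length + 1 = L.length ∧
        (↑L' : Multiset (Fin r)) = (↑L : Multiset (Fin r)).erase i ∧ v = vL Em Λ L'} := by
  induction L with
  | nil =>
    have : vL Em Λ ([] : List (Fin r)) = Λ := rfl
    rw [this, hEpΛ i]
    exact Submodule.zero_mem _
  | cons j L ih =>
    have h := congrArg (fun f => f (vL Em Λ L)) (hEpEm i j)
    simp only [LinearMap.sub_apply, LinearMap.comp_apply] at h
    have hcons : vL Em Λ (j :: L) = Em j (vL Em Λ L) := rfl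
    have key : Ep i (vL Em Λ (j :: L)) =
        (if i = j then H i else 0) (vL Em Λ L) + Em j (Ep i (vL Em Λ L)) := by
      rw [hcons]; exact eq_add_of_sub_eq h
    rw [key]
    apply Submodule.add_mem
    · by_cases hij : i = j
      · subst hij
        rw [if_pos rfl]
        obtain ⟨c, hc⟩ := H_vL Em H A lam Λ hHEm hHΛ i L
        rw [hc]
        refine Submodule.smul_mem _ _ (Submodule.subset_span ?_)
        refine ⟨L, by simp, ?_, rfl⟩
        rw [← Multiset.cons_coe, Multiset.erase_cons_head]
      · rw [if_neg hij]
        simp only [LinearMap.zero_apply]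
        exact Submodule.zero_mem _
    · have h1 : Em j (Ep i (vL Em Λ L)) ∈ Submodule.map (Em j)
          (Submodule.span ℂ {v : V | ∃ L' : List (Fin r), L'.length + 1 = L.length ∧
            (↑L' : Multiset (Fin r)) = (↑L : Multiset (Fin r)).erase i ∧ v = vL Em Λ L'}) :=
        Submodule.mem_map_of_mem ih
      rw [Submodule.map_span] at h1
      refine Submodule.span_mono ?_ h1
      rintro x ⟨v, ⟨L', hlen, hms, rfl⟩, rfl⟩
      refine ⟨j :: L', by simp [← hlen], ?_, rfl⟩
      by_cases hij : i = j
      · subst hij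
        have hiL : i ∈ (↑L : Multiset (Fin r)) := by
          by_contra hni
          rw [Multiset.erase_of_notMem hni] at hms
          have := congrArg Multiset.card hms
          simp at this
          omega
        rw [← Multiset.cons_coe, ← Multiset.cons_coe, Multiset.erase_cons_head, hms,
          Multiset.cons_erase hiL]
      · rw [← Multiset.cons_coe, ← Multiset.cons_coe, hms,
          Multiset.erase_cons_tail _ (fun hh => hij (by simpa using hh.symm))]

end Aux

theorem stmt1 {r : ℕ} (A : Fin r → Fin r → ℤ) (hA : ∀ i, A i i = 2)
    {V : Type*} [NormedAddCommGroup V] [InnerProductSpace ℂ V]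
    (Ep Em H : Fin r → (V →ₗ[ℂ] V))
    (hEpEm : ∀ i j, Ep i ∘ₗ Em j - Em j ∘ₗ Ep i = if i = j then H i else 0)
    (hHEp : ∀ i j, H i ∘ₗ Ep j - Ep j ∘ₗ H i = (A j i : ℂ) • Ep j)
    (hHEm : ∀ i j, H i ∘ₗ Em j - Em j ∘ₗ H i = (-(A j i) : ℂ) • Em j)
    (hHH : ∀ i j, H i ∘ₗ H j - H j ∘ₗ H i = 0)
    (hadj : ∀ i (x y : V), (inner ℂ (Ep i x) y : ℂ) = inner ℂ x (Em i y))
    (lam : Fin r → ℤ) (Λ : V)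
    (hΛnorm : (inner ℂ Λ Λ : ℂ) = 1)
    (hEpΛ : ∀ i, Ep i Λ = 0)
    (hHΛ : ∀ i, H i Λ = (lam i : ℂ) • Λ)
    (L₁ L₂ : List (Fin r)) (hlen : L₁.length = L₂.length)
    (hmult : (L₁ : Multiset (Fin r)) ≠ (L₂ : Multiset (Fin r))) :
    (inner ℂ (L₁.foldr (fun j y => Em j y) Λ) (L₂.foldr (fun j y => Em j y) Λ) : ℂ) = 0 := by
  have flip : ∀ i (x y : V), (inner ℂ (Em i x) y : ℂ) = inner ℂ x (Ep i y) := by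
    intro i x y
    rw [← inner_conj_symm, ← hadj, inner_conj_symm]
  induction L₁ generalizing L₂ with
  | nil =>
    have h2 : L₂ = [] := List.eq_nil_of_length_eq_zero hlen.symm
    subst h2
    exact absurd rfl hmult
  | cons i L₁' ih =>
    show (inner ℂ (Em i (vL Em Λ L₁')) (vL Em Λ L₂) : ℂ) = 0
    rw [flip]
    have hmem := Ep_vL_span Ep Em H A lam Λ hEpEm hHEm hEpΛ hHΛ i L₂
    have hker : Submodule.span ℂ
        {v : V | ∃ L' : List (Fin r), L'.length + 1 = L₂.length ∧
          (↑L' : Multiset (Fin r)) = (↑L₂ : Multiset (Fin r)).erase i ∧ v = vL Em Λ L'} ≤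
        LinearMap.ker (innerSL ℂ (vL Em Λ L₁') : V →L[ℂ] ℂ).toLinearMap := by
      rw [Submodule.span_le]
      rintro x ⟨L'', hlen'', hms'', rfl⟩
      simp only [SetLike.mem_coe, LinearMap.mem_ker, ContinuousLinearMap.coe_coe, innerSL_apply_apply]
      have hlen' : L₁'.length = L''.length := by
        simp only [List.length_cons] at hlen
        omega
      have hne : (↑L₁' : Multiset (Fin r)) ≠ (↑L'' : Multiset (Fin r)) := by
        intro heq
        have hiL₂ : i ∈ (↑L₂ : Multiset (Fin r)) := by
          by_contra hni
          rw [Multiset.erase_of_notMem hni] at hms''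
          have := congrArg Multiset.card hms''
          simp at this
          omega
        apply hmult
        have h3 : (↑(i :: L₁') : Multiset (Fin r)) = i ::ₘ (↑L₂ : Multiset (Fin r)).erase i := by
          rw [← Multiset.cons_coe, heq, hms'']
        rw [h3, Multiset.cons_erase hiL₂]
      exact ih L'' hlen' hne
    have := hker hmem
    simpa using this
end

section
/- Equation (le0): For every index a ∈ Fin r and every list L = [i₁, …, i_n] over Fin r, one has E⁺ a (v(L)) = Σ_{k : i_k = a} (λ a − Σ_{l = k+1}^{n} A (i_l) a : ℂ) • v(L with the k-th entry deleted), where the sum runs over all positions k of L whose entry equals a, and for each such position the coefficient subtracts A (i_l) a over all entries i_l that are applied to Λ before position k (i.e. over l > k). -/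
theorem stmt2 {r : ℕ} (A : Fin r → Fin r → ℤ) (hA : ∀ i, A i i = 2)
    {V : Type*} [NormedAddCommGroup V] [InnerProductSpace ℂ V]
    (Ep Em H : Fin r → (V →ₗ[ℂ] V))
    (hEpEm : ∀ i j, Ep i ∘ₗ Em j - Em j ∘ₗ Ep i = if i = j then H i else 0)
    (hHEp : ∀ i j, H i ∘ₗ Ep j - Ep j ∘ₗ H i = (A j i : ℂ) • Ep j)
    (hHEm : ∀ i j, H i ∘ₗ Em j - Em j ∘ₗ H i = (-(A j i) : ℂ) • Em j)
    (hHH : ∀ i j, H i ∘ₗ H j - H j ∘ₗ H i = 0)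
    (hadj : ∀ i (x y : V), (inner ℂ (Ep i x) y : ℂ) = inner ℂ x (Em i y))
    (lam : Fin r → ℤ) (Λ : V)
    (hΛnorm : (inner ℂ Λ Λ : ℂ) = 1)
    (hEpΛ : ∀ i, Ep i Λ = 0)
    (hHΛ : ∀ i, H i Λ = (lam i : ℂ) • Λ)
    (a : Fin r) (L : List (Fin r)) :
    Ep a (L.foldr (fun j y => Em j y) Λ) =
      ∑ k : Fin L.length,
        if L.get k = a then
          (((lam a : ℂ) -
              ∑ l : Fin L.length, if (k : ℕ) < (l : ℕ) then (A (L.get l) a : ℂ) else 0)) •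
            ((L.eraseIdx (k : ℕ)).foldr (fun j y => Em j y) Λ)
        else 0 := by
  have hH : ∀ (M : List (Fin r)) (i : Fin r),
      H i (M.foldr (fun j y => Em j y) Λ) =
        ((lam i : ℂ) - ∑ l : Fin M.length, (A (M.get l) i : ℂ)) •
          M.foldr (fun j y => Em j y) Λ := by
    intro M
    induction M with
    | nil => intro i; simp [hHΛ]
    | cons j M ih =>
      intro i
      have hc := congrArg (fun f : V →ₗ[ℂ] V => f (M.foldr (fun j y => Em j y) Λ)) (hHEm i j)
      simp only [LinearMap.sub_apply, LinearMap.comp_apply, LinearMap.smul_apply] at hc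
      rw [sub_eq_iff_eq_add] at hc
      simp only [List.foldr_cons, hc, ih, map_smul, List.length_cons, Fin.sum_univ_succ,
        List.get_cons_zero, List.get_cons_succ]
      have hg : ∀ l : Fin M.length, (j :: M).get l.succ = M.get l := fun l => rfl
      rw [← add_smul]
      simp only [hg]
      ring_nf
  induction L with
  | nil => simp [hEpΛ]
  | cons j L ih =>
    have hc := congrArg (fun f : V →ₗ[ℂ] V => f (L.foldr (fun j y => Em j y) Λ)) (hEpEm a j)
    simp only [LinearMap.sub_apply, LinearMap.comp_apply, LinearMap.zero_apply,
      apply_ite (fun f : V →ₗ[ℂ] V => f (L.foldr (fun j y => Em j y) Λ))] at hc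
    rw [sub_eq_iff_eq_add] at hc
    simp only [List.foldr_cons, hc, List.length_cons]
    rw [Fin.sum_univ_succ]
    congr 1
    · -- k = 0 term
      simp only [List.get_cons_zero, List.eraseIdx_cons_zero, Fin.val_zero]
      by_cases h : a = j
      · subst h
        have hg : ∀ l : Fin L.length, (a :: L).get l.succ = L.get l := fun l => rfl
        rw [if_pos rfl, hH]
        simp [Fin.sum_univ_succ, hg]
      · rw [if_neg h]; exact (if_neg (fun h' : j = a => h h'.symm)).symm
    · -- successor terms
      rw [ih, map_sum]
      refine Finset.sum_congr rfl fun k _ => ?_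
      simp only [List.get_cons_succ, Fin.val_succ, List.eraseIdx_cons_succ, List.foldr_cons,
        apply_ite (Em j), map_smul, map_zero]
      have hg : ∀ l : Fin L.length, (j :: L).get l.succ = L.get l := fun l => rfl
      congr 2
      simp [Fin.sum_univ_succ, hg, Nat.succ_lt_succ_iff]
end

section
/- Proposition 3.3: For every index i ∈ Fin r, every list J = [j₁, …, j_m] over Fin r, and every n ≥ 1, one has E⁺ i ((E⁻ i)^n (v(J))) = (n (λ i − (n − 1) − Σ_{b=1}^{m} A (j_b) i) : ℂ) • ((E⁻ i)^{n−1} (v(J))) + (E⁻ i)^n (E⁺ i (v(J))), where (E⁻ i)^n denotes the n-fold composition of E⁻ i. -/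
theorem stmt5 {r : ℕ} (A : Fin r → Fin r → ℤ) (hA : ∀ i, A i i = 2)
    {V : Type*} [NormedAddCommGroup V] [InnerProductSpace ℂ V]
    (Ep Em H : Fin r → (V →ₗ[ℂ] V))
    (hEpEm : ∀ i j, Ep i ∘ₗ Em j - Em j ∘ₗ Ep i = if i = j then H i else 0)
    (hHEp : ∀ i j, H i ∘ₗ Ep j - Ep j ∘ₗ H i = (A j i : ℂ) • Ep j)
    (hHEm : ∀ i j, H i ∘ₗ Em j - Em j ∘ₗ H i = (-(A j i) : ℂ) • Em j)
    (hHH : ∀ i j, H i ∘ₗ H j - H j ∘ₗ H i = 0)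
    (hadj : ∀ i (x y : V), (inner ℂ (Ep i x) y : ℂ) = inner ℂ x (Em i y))
    (lam : Fin r → ℤ) (Λ : V)
    (hΛnorm : (inner ℂ Λ Λ : ℂ) = 1)
    (hEpΛ : ∀ i, Ep i Λ = 0)
    (hHΛ : ∀ i, H i Λ = (lam i : ℂ) • Λ)
    (i : Fin r) (J : List (Fin r)) (n : ℕ) (hn : 1 ≤ n) :
    Ep i ((Em i ^ n) (J.foldr (fun j y => Em j y) Λ)) =
      (((n : ℤ) * (lam i - ((n : ℤ) - 1) - (J.map (fun j => A j i)).sum) : ℤ) : ℂ) •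
        ((Em i ^ (n - 1)) (J.foldr (fun j y => Em j y) Λ)) +
      (Em i ^ n) (Ep i (J.foldr (fun j y => Em j y) Λ)) := by
  -- commutator identities applied to vectors
  have comm1 : ∀ x : V, Ep i (Em i x) = Em i (Ep i x) + H i x := by
    intro x
    have h := congrArg (fun f : V →ₗ[ℂ] V => f x) (hEpEm i i)
    simp only [LinearMap.sub_apply, LinearMap.comp_apply, eq_self_iff_true, if_true] at h
    rw [sub_eq_iff_eq_add] at h
    rw [h]
    abel
  have comm2 : ∀ (j : Fin r) (x : V), H i (Em j x) = Em j (H i x) - ((A j i : ℂ)) • Em j x := by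
    intro j x
    have h := congrArg (fun f : V →ₗ[ℂ] V => f x) (hHEm i j)
    simp only [LinearMap.sub_apply, LinearMap.comp_apply, LinearMap.smul_apply] at h
    rw [sub_eq_iff_eq_add] at h
    rw [h]
    module
  -- H eigenvalue on Em-powers
  have hpow : ∀ (μ : ℂ) (w : V), H i w = μ • w →
      ∀ k : ℕ, H i ((Em i ^ k) w) = (μ - 2 * k) • (Em i ^ k) w := by
    intro μ w hw k
    induction k with
    | zero => simpa using hw
    | succ k ih =>
      have hp : (Em i ^ (k + 1)) w = Em i ((Em i ^ k) w) := by
        rw [pow_succ']; rfl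
      rw [hp, comm2 i, ih, hA i, map_smul]
      push_cast
      module
  -- main sl2 computation
  have key : ∀ (μ : ℂ) (w : V), H i w = μ • w → ∀ m : ℕ,
      Ep i ((Em i ^ (m + 1)) w) =
        ((m + 1 : ℂ) * (μ - m)) • (Em i ^ m) w + (Em i ^ (m + 1)) (Ep i w) := by
    intro μ w hw m
    induction m with
    | zero =>
      simp only [zero_add, pow_one, pow_zero, Module.End.one_apply, Nat.cast_zero]
      rw [comm1, hw]
      push_cast
      module
    | succ m ih =>
      have hp : ∀ k : ℕ, (Em i ^ (k + 1)) w = Em i ((Em i ^ k) w) := by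
        intro k; rw [pow_succ']; rfl
      rw [hp (m + 1), comm1, ih, hpow μ w hw (m + 1)]
      have hq : (Em i ^ (m + 1 + 1)) (Ep i w) = Em i ((Em i ^ (m + 1)) (Ep i w)) := by
        rw [pow_succ']; rfl
      rw [map_add, map_smul, hq, hp m]
      push_cast
      module
  -- H eigenvalue on v(J)
  have hvJ : H i (J.foldr (fun j y => Em j y) Λ) =
      ((lam i : ℂ) - ((J.map (fun j => A j i)).sum : ℤ)) • J.foldr (fun j y => Em j y) Λ := by
    induction J with
    | nil => simpa using hHΛ i
    | cons j J ih =>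
      simp only [List.foldr_cons, List.map_cons, List.sum_cons]
      rw [comm2 j, ih, map_smul]
      push_cast
      module
  obtain ⟨m, rfl⟩ : ∃ m, n = m + 1 := ⟨n - 1, (Nat.succ_pred_eq_of_pos hn).symm⟩
  rw [key _ _ hvJ m]
  simp only [Nat.add_sub_cancel]
  congr 1
  congr 1
  push_cast
  ring
end

section
/- Proposition 3.4: Fix i ∈ Fin r, a number of blocks l ≥ 1, lists J₁, …, J_{l+1} over Fin r all of whose entries are different from i, and exponents n₁, …, n_l ≥ 1. Define states from the bottom up: w_{l+1} := v(J_{l+1}), and for k = l, l−1, …, 1 let w_k be the result of applying (E⁻ i)^{n_k} to w_{k+1} and then applying E⁻ along the list J_k (rightmost entry first). For each k let c_k : ℤ be the H i–eigenvalue of w_{k+1}, namely c_k = λ i − Σ (A j i over all entries j of J_{k+1}, …, J_{l+1}) − 2 Σ_{b=k+1}^{l} n_b. Then E⁺ i (w₁) = Σ_{k=1}^{l} (n_k (c_k − (n_k − 1)) : ℂ) • w₁^{(k)}, where w₁^{(k)} denotes the state built in exactly the same way as w₁ but with the exponent n_k replaced by n_k − 1. -/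
noncomputable def chainApp {r : ℕ} {V : Type*} [AddCommGroup V] [Module ℂ V]
    (Em : Fin r → (V →ₗ[ℂ] V)) (J : List (Fin r)) (x : V) : V :=
  J.foldr (fun j y => Em j y) x

noncomputable def buildState {r : ℕ} {V : Type*} [AddCommGroup V] [Module ℂ V]
    (Em : Fin r → (V →ₗ[ℂ] V)) (i : Fin r) (l : ℕ)
    (J : Fin (l + 1) → List (Fin r)) (Λ : V) (m : Fin l → ℕ) : V :=
  (List.finRange l).foldr
    (fun k x => chainApp Em (J k.castSucc) ((Em i ^ m k) x))
    (chainApp Em (J (Fin.last l)) Λ)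

section Aux

variable {r : ℕ} {V : Type*} [AddCommGroup V] [Module ℂ V]
variable {Ep Em H : Fin r → (V →ₗ[ℂ] V)} {A : Fin r → Fin r → ℤ} {i : Fin r}

lemma chainApp_nil (x : V) : chainApp Em [] x = x := rfl

lemma chainApp_cons (j : Fin r) (J : List (Fin r)) (x : V) :
    chainApp Em (j :: J) x = Em j (chainApp Em J x) := rfl

lemma chainApp_add (J : List (Fin r)) (x y : V) :
    chainApp Em J (x + y) = chainApp Em J x + chainApp Em J y := by
  induction J with
  | nil => rfl
  | cons j J ih => simp [chainApp_cons, ih]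

lemma chainApp_smul (J : List (Fin r)) (c : ℂ) (x : V) :
    chainApp Em J (c • x) = c • chainApp Em J x := by
  induction J with
  | nil => rfl
  | cons j J ih => simp [chainApp_cons, ih]

lemma chainApp_zero (J : List (Fin r)) : chainApp Em J (0 : V) = 0 := by
  induction J with
  | nil => rfl
  | cons j J ih => simp [chainApp_cons, ih]

lemma chainApp_sum {ι : Type*} (J : List (Fin r)) (s : Finset ι) (f : ι → V) :
    chainApp Em J (∑ k ∈ s, f k) = ∑ k ∈ s, chainApp Em J (f k) := by
  classical
  induction s using Finset.induction with
  | empty => simp [chainApp_zero]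
  | insert a s h ih => simp [Finset.sum_insert h, chainApp_add, ih]

lemma chain_eig (hHEm : ∀ i j, H i ∘ₗ Em j - Em j ∘ₗ H i = (-(A j i) : ℂ) • Em j)
    (J : List (Fin r)) (c : ℂ) (x : V) (hx : H i x = c • x) :
    H i (chainApp Em J x) =
      (c - ((J.map fun j => (A j i : ℂ)).sum)) • chainApp Em J x := by
  induction J with
  | nil => simpa [chainApp_nil] using hx
  | cons j J ih =>
    have h := congrFun (congrArg DFunLike.coe (hHEm i j)) (chainApp Em J x)
    simp only [LinearMap.sub_apply, LinearMap.comp_apply, LinearMap.smul_apply] at h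
    have : H i (Em j (chainApp Em J x)) =
        Em j (H i (chainApp Em J x)) + (-(A j i : ℂ)) • Em j (chainApp Em J x) := by
      rw [← h]; abel
    rw [chainApp_cons, this, ih]
    simp [map_smul, smul_smul]
    module

lemma pow_eig (hA : ∀ i, A i i = 2)
    (hHEm : ∀ i j, H i ∘ₗ Em j - Em j ∘ₗ H i = (-(A j i) : ℂ) • Em j)
    (nn : ℕ) (c : ℂ) (x : V) (hx : H i x = c • x) :
    H i ((Em i ^ nn) x) = (c - 2 * nn) • (Em i ^ nn) x := by
  induction nn with
  | zero => simpa using hx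
  | succ m ih =>
    have h := congrFun (congrArg DFunLike.coe (hHEm i i)) ((Em i ^ m) x)
    simp only [LinearMap.sub_apply, LinearMap.comp_apply, LinearMap.smul_apply] at h
    have key : H i (Em i ((Em i ^ m) x)) =
        Em i (H i ((Em i ^ m) x)) + (-(A i i : ℂ)) • Em i ((Em i ^ m) x) := by
      rw [← h]; abel
    have hp : (Em i ^ (m + 1)) x = Em i ((Em i ^ m) x) := by
      rw [pow_succ']; rfl
    rw [hp, key, ih, hA i]
    push_cast
    simp [map_smul, smul_smul]
    module

lemma Ep_chain (hEpEm : ∀ i j, Ep i ∘ₗ Em j - Em j ∘ₗ Ep i = if i = j then H i else 0)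
    (J : List (Fin r)) (hJ : ∀ j ∈ J, j ≠ i) (x : V) :
    Ep i (chainApp Em J x) = chainApp Em J (Ep i x) := by
  induction J with
  | nil => rfl
  | cons j J ih =>
    have hne : i ≠ j := fun h => (hJ j (by simp)) h.symm
    have h := congrFun (congrArg DFunLike.coe (hEpEm i j)) (chainApp Em J x)
    simp only [if_neg hne, LinearMap.sub_apply, LinearMap.comp_apply,
      LinearMap.zero_apply] at h
    have : Ep i (Em j (chainApp Em J x)) = Em j (Ep i (chainApp Em J x)) := by
      linear_combination (norm := abel) h
    rw [chainApp_cons, this, ih (fun j hj => hJ j (by simp [hj]))]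
    rfl

lemma Ep_pow (hA : ∀ i, A i i = 2)
    (hEpEm : ∀ i j, Ep i ∘ₗ Em j - Em j ∘ₗ Ep i = if i = j then H i else 0)
    (hHEm : ∀ i j, H i ∘ₗ Em j - Em j ∘ₗ H i = (-(A j i) : ℂ) • Em j)
    (nn : ℕ) (c : ℂ) (x : V) (hx : H i x = c • x) :
    Ep i ((Em i ^ nn) x) =
      (Em i ^ nn) (Ep i x) + ((nn : ℂ) * (c - nn + 1)) • (Em i ^ (nn - 1)) x := by
  induction nn generalizing c x hx with
  | zero => simp
  | succ m ih =>
    have hx1 : H i (Em i x) = (c - 2) • Em i x := by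
      have := pow_eig (i := i) hA hHEm 1 c x hx
      simpa [pow_one] using this
    have hp : ∀ y : V, (Em i ^ (m + 1)) y = (Em i ^ m) (Em i y) := by
      intro y; rw [pow_succ]; rfl
    have hEpEmx : Ep i (Em i x) = Em i (Ep i x) + c • x := by
      have h := congrFun (congrArg DFunLike.coe (hEpEm i i)) x
      simp only [LinearMap.sub_apply, LinearMap.comp_apply, if_true,
        eq_self_iff_true] at h
      rw [hx] at h
      linear_combination (norm := abel) h
    rw [hp x, ih (c - 2) (Em i x) hx1, hEpEmx, map_add, map_smul, ← hp (Ep i x)]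
    cases m with
    | zero =>
      simp only [pow_zero, Module.End.one_apply, Nat.cast_zero, Nat.cast_one,
        Nat.zero_sub, Nat.add_sub_cancel]
      push_cast
      module
    | succ p =>
      have h2 : (Em i ^ (p + 1 - 1)) (Em i x) = (Em i ^ (p + 1)) x := by
        simp only [Nat.add_sub_cancel]
        rw [pow_succ]; rfl
      rw [h2]
      simp only [Nat.add_sub_cancel]
      push_cast
      module


lemma buildState_zero (J : Fin 1 → List (Fin r)) (Λ : V) (n : Fin 0 → ℕ) :
    buildState Em i 0 J Λ n = chainApp Em (J 0) Λ := rfl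

lemma buildState_succ (l : ℕ) (J : Fin (l + 2) → List (Fin r)) (Λ : V)
    (n : Fin (l + 1) → ℕ) :
    buildState Em i (l + 1) J Λ n =
      chainApp Em (J 0) ((Em i ^ n 0)
        (buildState Em i l (fun k => J k.succ) Λ (fun k => n k.succ))) := by
  unfold buildState
  rw [List.finRange_succ, List.foldr_cons, List.foldr_map]
  simp [Fin.succ_castSucc, -Fin.castSucc_succ]

lemma buildState_eig
    (hA : ∀ i, A i i = 2)
    (hHEm : ∀ i j, H i ∘ₗ Em j - Em j ∘ₗ H i = (-(A j i) : ℂ) • Em j)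
    (lam : Fin r → ℤ) (Λ : V) (hHΛ : H i Λ = (lam i : ℂ) • Λ) :
    ∀ (l : ℕ) (J : Fin (l + 1) → List (Fin r)) (n : Fin l → ℕ),
    H i (buildState Em i l J Λ n) =
      ((lam i : ℂ) - (∑ m : Fin (l + 1), ((J m).map fun j => (A j i : ℂ)).sum)
        - 2 * (∑ b : Fin l, (n b : ℂ))) • buildState Em i l J Λ n := by
  intro l
  induction l with
  | zero =>
    intro J n
    rw [buildState_zero]
    rw [chain_eig hHEm _ _ _ hHΛ]
    congr 1
    simp
  | succ m ih =>
    intro J n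
    rw [buildState_succ]
    rw [chain_eig hHEm _ _ _ (pow_eig hA hHEm _ _ _ (ih (fun k => J k.succ) (fun k => n k.succ)))]
    congr 1
    rw [Fin.sum_univ_succ (f := fun m => ((J m).map fun j => (A j i : ℂ)).sum),
      Fin.sum_univ_succ (f := fun b => (n b : ℂ))]
    ring


lemma mainAux
    (hA : ∀ i, A i i = 2)
    (hEpEm : ∀ i j, Ep i ∘ₗ Em j - Em j ∘ₗ Ep i = if i = j then H i else 0)
    (hHEm : ∀ i j, H i ∘ₗ Em j - Em j ∘ₗ H i = (-(A j i) : ℂ) • Em j)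
    (lam : Fin r → ℤ) (Λ : V) (hEpΛ : Ep i Λ = 0) (hHΛ : H i Λ = (lam i : ℂ) • Λ) :
    ∀ (l : ℕ) (J : Fin (l + 1) → List (Fin r)) (_hJ : ∀ k, ∀ j ∈ J k, j ≠ i)
      (n : Fin l → ℕ),
    Ep i (buildState Em i l J Λ n) =
      ∑ k : Fin l,
        ((n k : ℂ) *
          (((lam i : ℂ)
            - (∑ m : Fin (l + 1), if (k : ℕ) < (m : ℕ) then
                ((J m).map fun j => (A j i : ℂ)).sum else 0)
            - 2 * (∑ b : Fin l, if (k : ℕ) < (b : ℕ) then (n b : ℂ) else 0))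
            - (n k : ℂ) + 1)) •
        buildState Em i l J Λ (Function.update n k (n k - 1)) := by
  intro l
  induction l with
  | zero =>
    intro J hJ n
    rw [buildState_zero, Ep_chain hEpEm _ (hJ 0), hEpΛ, chainApp_zero]
    simp
  | succ m ih =>
    intro J hJ n
    set J' : Fin (m + 1) → List (Fin r) := fun k => J k.succ with hJ'
    set n' : Fin m → ℕ := fun k => n k.succ with hn'
    set w : V := buildState Em i m J' Λ n' with hw
    rw [buildState_succ, Ep_chain hEpEm _ (hJ 0),
      Ep_pow hA hEpEm hHEm _ _ _ (buildState_eig hA hHEm lam Λ hHΛ m J' n'),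
      ih J' (fun k j hj => hJ k.succ j hj) n']
    simp only [map_sum, map_smul, chainApp_add, chainApp_sum, chainApp_smul]
    conv_lhs => rw [add_comm]
    conv_rhs => rw [Fin.sum_univ_succ]
    congr 1
    · -- the k = 0 term
      have hstate : buildState Em i (m + 1) J Λ
          (Function.update n 0 (n 0 - 1)) =
          chainApp Em (J 0) ((Em i ^ (n 0 - 1)) w) := by
        rw [buildState_succ]
        have h0 : Function.update n 0 (n 0 - 1) 0 = n 0 - 1 :=
          Function.update_self _ _ _
        have hrest : (fun b : Fin m => Function.update n 0 (n 0 - 1) b.succ) = n' := by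
          funext b
          exact Function.update_of_ne (Fin.succ_ne_zero b) _ _
        rw [h0, hrest]
      rw [hstate]
      congr 1
      rw [Fin.sum_univ_succ (f := fun m_1 => if ((0 : Fin (m+1)) : ℕ) < (m_1 : ℕ) then
            ((J m_1).map fun j => (A j i : ℂ)).sum else 0),
        Fin.sum_univ_succ (f := fun b => if ((0 : Fin (m+1)) : ℕ) < (b : ℕ) then (n b : ℂ) else 0)]
      simp [hn', hJ']
    · -- the sum over succ indices
      refine Finset.sum_congr rfl (fun k _ => ?_)
      have hstate : buildState Em i (m + 1) J Λ
          (Function.update n k.succ (n k.succ - 1)) =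
          chainApp Em (J 0) ((Em i ^ n 0)
            (buildState Em i m J' Λ (Function.update n' k (n' k - 1)))) := by
        rw [buildState_succ]
        have h0 : Function.update n k.succ (n k.succ - 1) 0 = n 0 :=
          Function.update_of_ne (Fin.succ_ne_zero k).symm _ _
        have hrest : (fun b => Function.update n k.succ (n k.succ - 1) b.succ)
            = Function.update n' k (n' k - 1) := by
          funext b
          by_cases hb : b = k
          · subst hb; simp [hn']
          · rw [Function.update_of_ne (fun h => hb (Fin.succ_injective _ h)),
              Function.update_of_ne hb]
        rw [h0, hrest]
      rw [hstate]
      congr 1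
      rw [Fin.sum_univ_succ (f := fun m_1 => if ((k.succ : Fin (m+1)) : ℕ) < (m_1 : ℕ) then
            ((J m_1).map fun j => (A j i : ℂ)).sum else 0),
        Fin.sum_univ_succ (f := fun b => if ((k.succ : Fin (m+1)) : ℕ) < (b : ℕ) then (n b : ℂ) else 0)]
      simp [Nat.succ_lt_succ_iff, hn', hJ']

end Aux

theorem stmt6 {r : ℕ} (A : Fin r → Fin r → ℤ) (hA : ∀ i, A i i = 2)
    {V : Type*} [NormedAddCommGroup V] [InnerProductSpace ℂ V]
    (Ep Em H : Fin r → (V →ₗ[ℂ] V))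
    (hEpEm : ∀ i j, Ep i ∘ₗ Em j - Em j ∘ₗ Ep i = if i = j then H i else 0)
    (hHEp : ∀ i j, H i ∘ₗ Ep j - Ep j ∘ₗ H i = (A j i : ℂ) • Ep j)
    (hHEm : ∀ i j, H i ∘ₗ Em j - Em j ∘ₗ H i = (-(A j i) : ℂ) • Em j)
    (hHH : ∀ i j, H i ∘ₗ H j - H j ∘ₗ H i = 0)
    (hadj : ∀ i (x y : V), (inner ℂ (Ep i x) y : ℂ) = inner ℂ x (Em i y))
    (lam : Fin r → ℤ) (Λ : V)
    (hΛnorm : (inner ℂ Λ Λ : ℂ) = 1)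
    (hEpΛ : ∀ i, Ep i Λ = 0)
    (hHΛ : ∀ i, H i Λ = (lam i : ℂ) • Λ)
    (i : Fin r) (l : ℕ) (hl : 1 ≤ l)
    (J : Fin (l + 1) → List (Fin r)) (hJ : ∀ k, ∀ j ∈ J k, j ≠ i)
    (n : Fin l → ℕ) (hn : ∀ k, 1 ≤ n k) :
    Ep i (buildState Em i l J Λ n) =
      ∑ k : Fin l,
        (((n k : ℤ) *
            (lam i
              - (∑ m : Fin (l + 1),
                  if (k : ℕ) < (m : ℕ) then ((J m).map (fun j => A j i)).sum else 0)
              - 2 * (∑ b : Fin l, if (k : ℕ) < (b : ℕ) then (n b : ℤ) else 0)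
              - ((n k : ℤ) - 1)) : ℤ) : ℂ) •
          buildState Em i l J Λ (Function.update n k (n k - 1)) := by
  rw [mainAux hA hEpEm hHEm lam Λ (hEpΛ i) (hHΛ i) l J hJ n]
  refine Finset.sum_congr rfl (fun k _ => ?_)
  congr 1
  push_cast [apply_ite (fun z : ℤ => (z : ℂ)), List.map_map, Function.comp_def]
  ring
end

section
/- Theorem 3.5: For every index i ∈ Fin r and every list L over Fin r, the vector E⁺ i (v(L)) lies in the ℂ-linear span of the set of vectors v(L′), where L′ ranges over the lists obtained from L by deleting exactly one occurrence of the entry i. In particular, if i does not occur in L then E⁺ i (v(L)) = 0. -/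
theorem stmt7 {r : ℕ} (A : Fin r → Fin r → ℤ) (hA : ∀ i, A i i = 2)
    {V : Type*} [NormedAddCommGroup V] [InnerProductSpace ℂ V]
    (Ep Em H : Fin r → (V →ₗ[ℂ] V))
    (hEpEm : ∀ i j, Ep i ∘ₗ Em j - Em j ∘ₗ Ep i = if i = j then H i else 0)
    (hHEp : ∀ i j, H i ∘ₗ Ep j - Ep j ∘ₗ H i = (A j i : ℂ) • Ep j)
    (hHEm : ∀ i j, H i ∘ₗ Em j - Em j ∘ₗ H i = (-(A j i) : ℂ) • Em j)
    (hHH : ∀ i j, H i ∘ₗ H j - H j ∘ₗ H i = 0)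
    (hadj : ∀ i (x y : V), (inner ℂ (Ep i x) y : ℂ) = inner ℂ x (Em i y))
    (lam : Fin r → ℤ) (Λ : V)
    (hΛnorm : (inner ℂ Λ Λ : ℂ) = 1)
    (hEpΛ : ∀ i, Ep i Λ = 0)
    (hHΛ : ∀ i, H i Λ = (lam i : ℂ) • Λ)
    (i : Fin r) (L : List (Fin r)) :
    Ep i (L.foldr (fun j y => Em j y) Λ) ∈
      Submodule.span ℂ
        {w : V | ∃ k : Fin L.length, L.get k = i ∧
            w = (L.eraseIdx (k : ℕ)).foldr (fun j y => Em j y) Λ} ∧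
    (i ∉ L → Ep i (L.foldr (fun j y => Em j y) Λ) = 0) := by
  -- H acts diagonally on the vectors v(L)
  have hHv : ∀ (k : Fin r) (L : List (Fin r)),
      H k (L.foldr (fun j y => Em j y) Λ) =
        ((lam k : ℂ) - (L.map (fun j => (A j k : ℂ))).sum) •
          (L.foldr (fun j y => Em j y) Λ) := by
    intro k L
    induction L with
    | nil => simpa using hHΛ k
    | cons j L ih =>
      have hc := congrArg (fun f : V →ₗ[ℂ] V => f (L.foldr (fun j y => Em j y) Λ)) (hHEm k j)
      simp only [LinearMap.sub_apply, LinearMap.comp_apply, LinearMap.smul_apply] at hc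
      have : H k (Em j (L.foldr (fun j y => Em j y) Λ)) =
          Em j (H k (L.foldr (fun j y => Em j y) Λ)) +
            (-(A j k : ℂ)) • Em j (L.foldr (fun j y => Em j y) Λ) := by
        rw [← hc]; abel
      simp only [List.foldr_cons, this, ih, map_smul, List.map_cons, List.sum_cons]
      module
  have key : ∀ (L : List (Fin r)),
      Ep i (L.foldr (fun j y => Em j y) Λ) ∈
        Submodule.span ℂ
          {w : V | ∃ k : Fin L.length, L.get k = i ∧
              w = (L.eraseIdx (k : ℕ)).foldr (fun j y => Em j y) Λ} := by
    intro L
    induction L with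
    | nil => simp [hEpΛ i]
    | cons j L ih =>
      set v := L.foldr (fun j y => Em j y) Λ with hv
      have hc := congrArg (fun f : V →ₗ[ℂ] V => f v) (hEpEm i j)
      simp only [LinearMap.sub_apply, LinearMap.comp_apply] at hc
      have hsplit : Ep i (Em j v) = Em j (Ep i v) + (if i = j then H i else 0) v := by
        rw [← hc]; abel
      have h1 : Em j (Ep i v) ∈
          Submodule.span ℂ
            {w : V | ∃ k : Fin (j :: L).length, (j :: L).get k = i ∧
                w = ((j :: L).eraseIdx (k : ℕ)).foldr (fun j y => Em j y) Λ} := by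
        have hm : Em j (Ep i v) ∈ Submodule.map (Em j)
            (Submodule.span ℂ {w : V | ∃ k : Fin L.length, L.get k = i ∧
                w = (L.eraseIdx (k : ℕ)).foldr (fun j y => Em j y) Λ}) :=
          Submodule.mem_map_of_mem ih
        rw [Submodule.map_span] at hm
        refine Submodule.span_mono ?_ hm
        rintro w ⟨u, ⟨k, hk, rfl⟩, rfl⟩
        exact ⟨k.succ, by simpa using hk, by simp⟩
      rw [List.foldr_cons, hsplit]
      refine Submodule.add_mem _ h1 ?_
      by_cases hij : i = j
      · subst hij
        have hIf : (if i = i then H i else 0) v = H i v := by simp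
        rw [hIf, hv, hHv i L]
        refine Submodule.smul_mem _ _ (Submodule.subset_span ?_)
        exact ⟨⟨0, by simp⟩, by simp, by simp [hv]⟩
      · simp [hij]
  refine ⟨key L, fun hi => ?_⟩
  have hset : {w : V | ∃ k : Fin L.length, L.get k = i ∧
      w = (L.eraseIdx (k : ℕ)).foldr (fun j y => Em j y) Λ} = ∅ := by
    ext w
    simp only [Set.mem_setOf_eq, Set.mem_empty_iff_false, iff_false, not_exists]
    rintro k ⟨hk, -⟩
    exact hi (hk ▸ L.get_mem k)
  have h := key L
  rw [hset] at h
  simpa using h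
end

section
/- Theorem 3.6 (path dependence of the inner product, with the G₂ values): In the G₂ specialization, let a := v([0, 1, 0, 0, 1]) (i.e. E⁻₁E⁻₂E⁻₁E⁻₁E⁻₂Λ) and b := v([1, 0, 0, 0, 1]) (i.e. E⁻₂E⁻₁E⁻₁E⁻₁E⁻₂Λ), two states of level 5 defined by different paths reaching the same weight (the two lists have the same multiset of entries). Then ⟪a, a⟫ = 24, ⟪a, b⟫ = 36 and ⟪b, b⟫ = 72; in particular ⟪a, a⟫ ≠ ⟪b, b⟫, so the inner product of states depends on the paths defining the states. -/
theorem stmt8 {V : Type*} [NormedAddCommGroup V] [InnerProductSpace ℂ V]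
    (A : Fin 2 → Fin 2 → ℤ)
    (hA00 : A 0 0 = 2) (hA01 : A 0 1 = -1) (hA10 : A 1 0 = -3) (hA11 : A 1 1 = 2)
    (Ep Em H : Fin 2 → (V →ₗ[ℂ] V))
    (hEpEm : ∀ i j, Ep i ∘ₗ Em j - Em j ∘ₗ Ep i = if i = j then H i else 0)
    (hHEp : ∀ i j, H i ∘ₗ Ep j - Ep j ∘ₗ H i = (A j i : ℂ) • Ep j)
    (hHEm : ∀ i j, H i ∘ₗ Em j - Em j ∘ₗ H i = (-(A j i) : ℂ) • Em j)
    (hHH : ∀ i j, H i ∘ₗ H j - H j ∘ₗ H i = 0)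
    (hadj : ∀ i (x y : V), (inner ℂ (Ep i x) y : ℂ) = inner ℂ x (Em i y))
    (lam : Fin 2 → ℤ) (hlam0 : lam 0 = 0) (hlam1 : lam 1 = 1)
    (Λ : V)
    (hΛnorm : (inner ℂ Λ Λ : ℂ) = 1)
    (hEpΛ : ∀ i, Ep i Λ = 0)
    (hHΛ : ∀ i, H i Λ = (lam i : ℂ) • Λ)
    (a b : V)
    (ha : a = ([0, 1, 0, 0, 1] : List (Fin 2)).foldr (fun j y => Em j y) Λ)
    (hb : b = ([1, 0, 0, 0, 1] : List (Fin 2)).foldr (fun j y => Em j y) Λ) :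
    (inner ℂ a a : ℂ) = 24 ∧ (inner ℂ a b : ℂ) = 36 ∧ (inner ℂ b b : ℂ) = 72 ∧
      (inner ℂ a a : ℂ) ≠ (inner ℂ b b : ℂ) := by
  have he00 : ∀ x : V, Ep 0 (Em 0 x) = Em 0 (Ep 0 x) + H 0 x := by
    intro x; have h := LinearMap.congr_fun (hEpEm 0 0) x
    simp only [LinearMap.sub_apply, LinearMap.comp_apply, if_pos rfl, if_true, eq_self_iff_true] at h; linear_combination (norm := module) h
  have he11 : ∀ x : V, Ep 1 (Em 1 x) = Em 1 (Ep 1 x) + H 1 x := by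
    intro x; have h := LinearMap.congr_fun (hEpEm 1 1) x
    simp only [LinearMap.sub_apply, LinearMap.comp_apply, if_pos rfl, if_true, eq_self_iff_true] at h; linear_combination (norm := module) h
  have he01 : ∀ x : V, Ep 0 (Em 1 x) = Em 1 (Ep 0 x) := by
    intro x; have h := LinearMap.congr_fun (hEpEm 0 1) x
    simp only [LinearMap.sub_apply, LinearMap.comp_apply, if_neg (by decide : ¬(0:Fin 2)=1), LinearMap.zero_apply] at h
    linear_combination (norm := module) h
  have he10 : ∀ x : V, Ep 1 (Em 0 x) = Em 0 (Ep 1 x) := by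
    intro x; have h := LinearMap.congr_fun (hEpEm 1 0) x
    simp only [LinearMap.sub_apply, LinearMap.comp_apply, if_neg (by decide : ¬(1:Fin 2)=0), LinearMap.zero_apply] at h
    linear_combination (norm := module) h
  have hh00 : ∀ x : V, H 0 (Em 0 x) = Em 0 (H 0 x) + (-2:ℂ) • Em 0 x := by
    intro x; have h := LinearMap.congr_fun (hHEm 0 0) x
    simp only [LinearMap.sub_apply, LinearMap.comp_apply, LinearMap.smul_apply, hA00] at h
    push_cast at h; linear_combination (norm := module) h
  have hh01 : ∀ x : V, H 0 (Em 1 x) = Em 1 (H 0 x) + (3:ℂ) • Em 1 x := by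
    intro x; have h := LinearMap.congr_fun (hHEm 0 1) x
    simp only [LinearMap.sub_apply, LinearMap.comp_apply, LinearMap.smul_apply, hA10] at h
    push_cast at h; linear_combination (norm := module) h
  have hh10 : ∀ x : V, H 1 (Em 0 x) = Em 0 (H 1 x) + (1:ℂ) • Em 0 x := by
    intro x; have h := LinearMap.congr_fun (hHEm 1 0) x
    simp only [LinearMap.sub_apply, LinearMap.comp_apply, LinearMap.smul_apply, hA01] at h
    push_cast at h; linear_combination (norm := module) h
  have hh11 : ∀ x : V, H 1 (Em 1 x) = Em 1 (H 1 x) + (-2:ℂ) • Em 1 x := by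
    intro x; have h := LinearMap.congr_fun (hHEm 1 1) x
    simp only [LinearMap.sub_apply, LinearMap.comp_apply, LinearMap.smul_apply, hA11] at h
    push_cast at h; linear_combination (norm := module) h
  have W0_e : H 0 Λ = (0:ℂ) • Λ := by rw [hHΛ, hlam0]; norm_num
  have W1_e : H 1 Λ = (1:ℂ) • Λ := by rw [hHΛ, hlam1]; norm_num
  have E0_e : Ep 0 Λ = (0:V) := hEpΛ 0
  have E1_e : Ep 1 Λ = (0:V) := hEpΛ 1
  have W0_0 : H 0 (Em 0 (Λ)) = (-2:ℂ) • (Em 0 (Λ)) := by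
    rw [hh00, W0_e, map_smul] <;> module
  have W0_1 : H 0 (Em 1 (Λ)) = (3:ℂ) • (Em 1 (Λ)) := by
    rw [hh01, W0_e, map_smul] <;> module
  have W1_1 : H 1 (Em 1 (Λ)) = (-1:ℂ) • (Em 1 (Λ)) := by
    rw [hh11, W1_e, map_smul] <;> module
  have W0_00 : H 0 (Em 0 (Em 0 (Λ))) = (-4:ℂ) • (Em 0 (Em 0 (Λ))) := by
    rw [hh00, W0_0, map_smul] <;> module
  have W0_01 : H 0 (Em 0 (Em 1 (Λ))) = (1:ℂ) • (Em 0 (Em 1 (Λ))) := by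
    rw [hh00, W0_1, map_smul] <;> module
  have W1_01 : H 1 (Em 0 (Em 1 (Λ))) = (0:ℂ) • (Em 0 (Em 1 (Λ))) := by
    rw [hh10, W1_1, map_smul] <;> module
  have W0_10 : H 0 (Em 1 (Em 0 (Λ))) = (1:ℂ) • (Em 1 (Em 0 (Λ))) := by
    rw [hh01, W0_0, map_smul] <;> module
  have W0_001 : H 0 (Em 0 (Em 0 (Em 1 (Λ)))) = (-1:ℂ) • (Em 0 (Em 0 (Em 1 (Λ)))) := by
    rw [hh00, W0_01, map_smul] <;> module
  have W1_001 : H 1 (Em 0 (Em 0 (Em 1 (Λ)))) = (1:ℂ) • (Em 0 (Em 0 (Em 1 (Λ)))) := by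
    rw [hh10, W1_01, map_smul] <;> module
  have W0_100 : H 0 (Em 1 (Em 0 (Em 0 (Λ)))) = (-1:ℂ) • (Em 1 (Em 0 (Em 0 (Λ)))) := by
    rw [hh01, W0_00, map_smul] <;> module
  have W1_0001 : H 1 (Em 0 (Em 0 (Em 0 (Em 1 (Λ))))) = (2:ℂ) • (Em 0 (Em 0 (Em 0 (Em 1 (Λ))))) := by
    rw [hh10, W1_001, map_smul] <;> module
  have W0_1001 : H 0 (Em 1 (Em 0 (Em 0 (Em 1 (Λ))))) = (2:ℂ) • (Em 1 (Em 0 (Em 0 (Em 1 (Λ))))) := by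
    rw [hh01, W0_001, map_smul] <;> module
  have E0_0 : Ep 0 (Em 0 (Λ)) = (0:V) := by
    rw [he00]; simp only [E0_e, W0_e, map_add, map_smul, map_zero] <;> module
  have E0_1 : Ep 0 (Em 1 (Λ)) = (0:V) := by
    rw [he01]; simp only [E0_e, map_add, map_smul, map_zero] <;> module
  have E1_1 : Ep 1 (Em 1 (Λ)) = (1:ℂ) • (Λ) := by
    rw [he11]; simp only [E1_e, W1_e, map_add, map_smul, map_zero] <;> module
  have E0_00 : Ep 0 (Em 0 (Em 0 (Λ))) = (-2:ℂ) • (Em 0 (Λ)) := by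
    rw [he00]; simp only [E0_0, W0_0, map_add, map_smul, map_zero] <;> module
  have E0_01 : Ep 0 (Em 0 (Em 1 (Λ))) = (3:ℂ) • (Em 1 (Λ)) := by
    rw [he00]; simp only [E0_1, W0_1, map_add, map_smul, map_zero] <;> module
  have E0_10 : Ep 0 (Em 1 (Em 0 (Λ))) = (0:V) := by
    rw [he01]; simp only [E0_0, map_add, map_smul, map_zero] <;> module
  have E1_01 : Ep 1 (Em 0 (Em 1 (Λ))) = (1:ℂ) • (Em 0 (Λ)) := by
    rw [he10]; simp only [E1_1, map_add, map_smul, map_zero] <;> module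
  have E0_000 : Ep 0 (Em 0 (Em 0 (Em 0 (Λ)))) = (-6:ℂ) • (Em 0 (Em 0 (Λ))) := by
    rw [he00]; simp only [E0_00, W0_00, map_add, map_smul, map_zero] <;> module
  have E0_001 : Ep 0 (Em 0 (Em 0 (Em 1 (Λ)))) = (4:ℂ) • (Em 0 (Em 1 (Λ))) := by
    rw [he00]; simp only [E0_01, W0_01, map_add, map_smul, map_zero] <;> module
  have E0_010 : Ep 0 (Em 0 (Em 1 (Em 0 (Λ)))) = (1:ℂ) • (Em 1 (Em 0 (Λ))) := by
    rw [he00]; simp only [E0_10, W0_10, map_add, map_smul, map_zero] <;> module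
  have E0_100 : Ep 0 (Em 1 (Em 0 (Em 0 (Λ)))) = (-2:ℂ) • (Em 1 (Em 0 (Λ))) := by
    rw [he01]; simp only [E0_00, map_add, map_smul, map_zero] <;> module
  have E1_001 : Ep 1 (Em 0 (Em 0 (Em 1 (Λ)))) = (1:ℂ) • (Em 0 (Em 0 (Λ))) := by
    rw [he10]; simp only [E1_01, map_add, map_smul, map_zero] <;> module
  have E1_101 : Ep 1 (Em 1 (Em 0 (Em 1 (Λ)))) = (1:ℂ) • (Em 1 (Em 0 (Λ))) := by
    rw [he11]; simp only [E1_01, W1_01, map_add, map_smul, map_zero] <;> module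
  have E0_0001 : Ep 0 (Em 0 (Em 0 (Em 0 (Em 1 (Λ))))) = (3:ℂ) • (Em 0 (Em 0 (Em 1 (Λ)))) := by
    rw [he00]; simp only [E0_001, W0_001, map_add, map_smul, map_zero] <;> module
  have E0_0100 : Ep 0 (Em 0 (Em 1 (Em 0 (Em 0 (Λ))))) = (-2:ℂ) • (Em 0 (Em 1 (Em 0 (Λ)))) + (-1:ℂ) • (Em 1 (Em 0 (Em 0 (Λ)))) := by
    rw [he00]; simp only [E0_100, W0_100, map_add, map_smul, map_zero] <;> module
  have E0_1000 : Ep 0 (Em 1 (Em 0 (Em 0 (Em 0 (Λ))))) = (-6:ℂ) • (Em 1 (Em 0 (Em 0 (Λ)))) := by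
    rw [he01]; simp only [E0_000, map_add, map_smul, map_zero] <;> module
  have E0_1001 : Ep 0 (Em 1 (Em 0 (Em 0 (Em 1 (Λ))))) = (4:ℂ) • (Em 1 (Em 0 (Em 1 (Λ)))) := by
    rw [he01]; simp only [E0_001, map_add, map_smul, map_zero] <;> module
  have E1_0001 : Ep 1 (Em 0 (Em 0 (Em 0 (Em 1 (Λ))))) = (1:ℂ) • (Em 0 (Em 0 (Em 0 (Λ)))) := by
    rw [he10]; simp only [E1_001, map_add, map_smul, map_zero] <;> module
  have E1_0101 : Ep 1 (Em 0 (Em 1 (Em 0 (Em 1 (Λ))))) = (1:ℂ) • (Em 0 (Em 1 (Em 0 (Λ)))) := by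
    rw [he10]; simp only [E1_101, map_add, map_smul, map_zero] <;> module
  have E1_1001 : Ep 1 (Em 1 (Em 0 (Em 0 (Em 1 (Λ))))) = (1:ℂ) • (Em 0 (Em 0 (Em 1 (Λ)))) + (1:ℂ) • (Em 1 (Em 0 (Em 0 (Λ)))) := by
    rw [he11]; simp only [E1_001, W1_001, map_add, map_smul, map_zero] <;> module
  have E0_01001 : Ep 0 (Em 0 (Em 1 (Em 0 (Em 0 (Em 1 (Λ)))))) = (4:ℂ) • (Em 0 (Em 1 (Em 0 (Em 1 (Λ))))) + (2:ℂ) • (Em 1 (Em 0 (Em 0 (Em 1 (Λ))))) := by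
    rw [he00]; simp only [E0_1001, W0_1001, map_add, map_smul, map_zero] <;> module
  have E1_01001 : Ep 1 (Em 0 (Em 1 (Em 0 (Em 0 (Em 1 (Λ)))))) = (1:ℂ) • (Em 0 (Em 0 (Em 0 (Em 1 (Λ))))) + (1:ℂ) • (Em 0 (Em 1 (Em 0 (Em 0 (Λ))))) := by
    rw [he10]; simp only [E1_1001, map_add, map_smul, map_zero] <;> module
  have E1_10001 : Ep 1 (Em 1 (Em 0 (Em 0 (Em 0 (Em 1 (Λ)))))) = (2:ℂ) • (Em 0 (Em 0 (Em 0 (Em 1 (Λ))))) + (1:ℂ) • (Em 1 (Em 0 (Em 0 (Em 0 (Λ))))) := by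
    rw [he11]; simp only [E1_0001, W1_0001, map_add, map_smul, map_zero] <;> module
  have haa : (inner ℂ a a : ℂ) = 24 := by
    rw [ha]
    simp only [List.foldr_cons, List.foldr_nil]
    calc (inner ℂ (Em 0 (Em 1 (Em 0 (Em 0 (Em 1 (Λ)))))) (Em 0 (Em 1 (Em 0 (Em 0 (Em 1 (Λ)))))) : ℂ)
      _ = (inner ℂ ((4:ℂ) • (Em 0 (Em 1 (Em 0 (Em 1 (Λ))))) + (2:ℂ) • (Em 1 (Em 0 (Em 0 (Em 1 (Λ)))))) (Em 1 (Em 0 (Em 0 (Em 1 (Λ))))) : ℂ) := by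
            have hstep : Ep 0 (Em 0 (Em 1 (Em 0 (Em 0 (Em 1 (Λ)))))) = (4:ℂ) • (Em 0 (Em 1 (Em 0 (Em 1 (Λ))))) + (2:ℂ) • (Em 1 (Em 0 (Em 0 (Em 1 (Λ))))) := by
              simp only [E0_01001, map_add, map_smul, map_zero, smul_zero] <;> module
            rw [← hstep]; exact (hadj _ _ _).symm
      _ = (inner ℂ ((2:ℂ) • (Em 0 (Em 0 (Em 1 (Λ)))) + (4:ℂ) • (Em 0 (Em 1 (Em 0 (Λ)))) + (2:ℂ) • (Em 1 (Em 0 (Em 0 (Λ))))) (Em 0 (Em 0 (Em 1 (Λ)))) : ℂ) := by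
            have hstep : Ep 1 ((4:ℂ) • (Em 0 (Em 1 (Em 0 (Em 1 (Λ))))) + (2:ℂ) • (Em 1 (Em 0 (Em 0 (Em 1 (Λ)))))) = (2:ℂ) • (Em 0 (Em 0 (Em 1 (Λ)))) + (4:ℂ) • (Em 0 (Em 1 (Em 0 (Λ)))) + (2:ℂ) • (Em 1 (Em 0 (Em 0 (Λ)))) := by
              simp only [E1_0101, E1_1001, map_add, map_smul, map_zero, smul_zero] <;> module
            rw [← hstep]; exact (hadj _ _ _).symm
      _ = (inner ℂ ((8:ℂ) • (Em 0 (Em 1 (Λ)))) (Em 0 (Em 1 (Λ))) : ℂ) := by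
            have hstep : Ep 0 ((2:ℂ) • (Em 0 (Em 0 (Em 1 (Λ)))) + (4:ℂ) • (Em 0 (Em 1 (Em 0 (Λ)))) + (2:ℂ) • (Em 1 (Em 0 (Em 0 (Λ))))) = (8:ℂ) • (Em 0 (Em 1 (Λ))) := by
              simp only [E0_010, E0_100, E0_001, map_add, map_smul, map_zero, smul_zero] <;> module
            rw [← hstep]; exact (hadj _ _ _).symm
      _ = (inner ℂ ((24:ℂ) • (Em 1 (Λ))) (Em 1 (Λ)) : ℂ) := by
            have hstep : Ep 0 ((8:ℂ) • (Em 0 (Em 1 (Λ)))) = (24:ℂ) • (Em 1 (Λ)) := by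
              simp only [E0_01, map_add, map_smul, map_zero, smul_zero] <;> module
            rw [← hstep]; exact (hadj _ _ _).symm
      _ = (inner ℂ ((24:ℂ) • (Λ)) (Λ) : ℂ) := by
            have hstep : Ep 1 ((24:ℂ) • (Em 1 (Λ))) = (24:ℂ) • (Λ) := by
              simp only [E1_1, map_add, map_smul, map_zero, smul_zero] <;> module
            rw [← hstep]; exact (hadj _ _ _).symm
      _ = 24 := by rw [inner_smul_left, hΛnorm, mul_one, map_ofNat]
  have hab : (inner ℂ a b : ℂ) = 36 := by
    rw [ha, hb]
    simp only [List.foldr_cons, List.foldr_nil]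
    calc (inner ℂ (Em 0 (Em 1 (Em 0 (Em 0 (Em 1 (Λ)))))) (Em 1 (Em 0 (Em 0 (Em 0 (Em 1 (Λ)))))) : ℂ)
      _ = (inner ℂ ((1:ℂ) • (Em 0 (Em 0 (Em 0 (Em 1 (Λ))))) + (1:ℂ) • (Em 0 (Em 1 (Em 0 (Em 0 (Λ)))))) (Em 0 (Em 0 (Em 0 (Em 1 (Λ))))) : ℂ) := by
            have hstep : Ep 1 (Em 0 (Em 1 (Em 0 (Em 0 (Em 1 (Λ)))))) = (1:ℂ) • (Em 0 (Em 0 (Em 0 (Em 1 (Λ))))) + (1:ℂ) • (Em 0 (Em 1 (Em 0 (Em 0 (Λ))))) := by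
              simp only [E1_01001, map_add, map_smul, map_zero, smul_zero] <;> module
            rw [← hstep]; exact (hadj _ _ _).symm
      _ = (inner ℂ ((3:ℂ) • (Em 0 (Em 0 (Em 1 (Λ)))) + (-2:ℂ) • (Em 0 (Em 1 (Em 0 (Λ)))) + (-1:ℂ) • (Em 1 (Em 0 (Em 0 (Λ))))) (Em 0 (Em 0 (Em 1 (Λ)))) : ℂ) := by
            have hstep : Ep 0 ((1:ℂ) • (Em 0 (Em 0 (Em 0 (Em 1 (Λ))))) + (1:ℂ) • (Em 0 (Em 1 (Em 0 (Em 0 (Λ)))))) = (3:ℂ) • (Em 0 (Em 0 (Em 1 (Λ)))) + (-2:ℂ) • (Em 0 (Em 1 (Em 0 (Λ)))) + (-1:ℂ) • (Em 1 (Em 0 (Em 0 (Λ)))) := by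
              simp only [E0_0100, E0_0001, map_add, map_smul, map_zero, smul_zero] <;> module
            rw [← hstep]; exact (hadj _ _ _).symm
      _ = (inner ℂ ((12:ℂ) • (Em 0 (Em 1 (Λ)))) (Em 0 (Em 1 (Λ))) : ℂ) := by
            have hstep : Ep 0 ((3:ℂ) • (Em 0 (Em 0 (Em 1 (Λ)))) + (-2:ℂ) • (Em 0 (Em 1 (Em 0 (Λ)))) + (-1:ℂ) • (Em 1 (Em 0 (Em 0 (Λ))))) = (12:ℂ) • (Em 0 (Em 1 (Λ))) := by
              simp only [E0_010, E0_100, E0_001, map_add, map_smul, map_zero, smul_zero] <;> module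
            rw [← hstep]; exact (hadj _ _ _).symm
      _ = (inner ℂ ((36:ℂ) • (Em 1 (Λ))) (Em 1 (Λ)) : ℂ) := by
            have hstep : Ep 0 ((12:ℂ) • (Em 0 (Em 1 (Λ)))) = (36:ℂ) • (Em 1 (Λ)) := by
              simp only [E0_01, map_add, map_smul, map_zero, smul_zero] <;> module
            rw [← hstep]; exact (hadj _ _ _).symm
      _ = (inner ℂ ((36:ℂ) • (Λ)) (Λ) : ℂ) := by
            have hstep : Ep 1 ((36:ℂ) • (Em 1 (Λ))) = (36:ℂ) • (Λ) := by
              simp only [E1_1, map_add, map_smul, map_zero, smul_zero] <;> module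
            rw [← hstep]; exact (hadj _ _ _).symm
      _ = 36 := by rw [inner_smul_left, hΛnorm, mul_one, map_ofNat]
  have hbb : (inner ℂ b b : ℂ) = 72 := by
    rw [hb]
    simp only [List.foldr_cons, List.foldr_nil]
    calc (inner ℂ (Em 1 (Em 0 (Em 0 (Em 0 (Em 1 (Λ)))))) (Em 1 (Em 0 (Em 0 (Em 0 (Em 1 (Λ)))))) : ℂ)
      _ = (inner ℂ ((2:ℂ) • (Em 0 (Em 0 (Em 0 (Em 1 (Λ))))) + (1:ℂ) • (Em 1 (Em 0 (Em 0 (Em 0 (Λ)))))) (Em 0 (Em 0 (Em 0 (Em 1 (Λ))))) : ℂ) := by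
            have hstep : Ep 1 (Em 1 (Em 0 (Em 0 (Em 0 (Em 1 (Λ)))))) = (2:ℂ) • (Em 0 (Em 0 (Em 0 (Em 1 (Λ))))) + (1:ℂ) • (Em 1 (Em 0 (Em 0 (Em 0 (Λ))))) := by
              simp only [E1_10001, map_add, map_smul, map_zero, smul_zero] <;> module
            rw [← hstep]; exact (hadj _ _ _).symm
      _ = (inner ℂ ((6:ℂ) • (Em 0 (Em 0 (Em 1 (Λ)))) + (-6:ℂ) • (Em 1 (Em 0 (Em 0 (Λ))))) (Em 0 (Em 0 (Em 1 (Λ)))) : ℂ) := by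
            have hstep : Ep 0 ((2:ℂ) • (Em 0 (Em 0 (Em 0 (Em 1 (Λ))))) + (1:ℂ) • (Em 1 (Em 0 (Em 0 (Em 0 (Λ)))))) = (6:ℂ) • (Em 0 (Em 0 (Em 1 (Λ)))) + (-6:ℂ) • (Em 1 (Em 0 (Em 0 (Λ)))) := by
              simp only [E0_1000, E0_0001, map_add, map_smul, map_zero, smul_zero] <;> module
            rw [← hstep]; exact (hadj _ _ _).symm
      _ = (inner ℂ ((24:ℂ) • (Em 0 (Em 1 (Λ))) + (12:ℂ) • (Em 1 (Em 0 (Λ)))) (Em 0 (Em 1 (Λ))) : ℂ) := by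
            have hstep : Ep 0 ((6:ℂ) • (Em 0 (Em 0 (Em 1 (Λ)))) + (-6:ℂ) • (Em 1 (Em 0 (Em 0 (Λ))))) = (24:ℂ) • (Em 0 (Em 1 (Λ))) + (12:ℂ) • (Em 1 (Em 0 (Λ))) := by
              simp only [E0_100, E0_001, map_add, map_smul, map_zero, smul_zero] <;> module
            rw [← hstep]; exact (hadj _ _ _).symm
      _ = (inner ℂ ((72:ℂ) • (Em 1 (Λ))) (Em 1 (Λ)) : ℂ) := by
            have hstep : Ep 0 ((24:ℂ) • (Em 0 (Em 1 (Λ))) + (12:ℂ) • (Em 1 (Em 0 (Λ)))) = (72:ℂ) • (Em 1 (Λ)) := by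
              simp only [E0_10, E0_01, map_add, map_smul, map_zero, smul_zero] <;> module
            rw [← hstep]; exact (hadj _ _ _).symm
      _ = (inner ℂ ((72:ℂ) • (Λ)) (Λ) : ℂ) := by
            have hstep : Ep 1 ((72:ℂ) • (Em 1 (Λ))) = (72:ℂ) • (Λ) := by
              simp only [E1_1, map_add, map_smul, map_zero, smul_zero] <;> module
            rw [← hstep]; exact (hadj _ _ _).symm
      _ = 72 := by rw [inner_smul_left, hΛnorm, mul_one, map_ofNat]
  refine ⟨haa, hab, hbb, ?_⟩
  rw [haa, hbb]; norm_num
end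

section
/- Proposition 4.1 (norm of a special state): Fix l ≥ 1, indices i₁, …, i_l ∈ Fin r, exponents n₁, …, n_l ≥ 1, and lists J₁, …, J_{l+1} over Fin r. Define states from the bottom up: start from Λ; having built a partial state ψ, each application of an operator E⁻ j with j an entry of some block J_k is assumed to satisfy E⁺ j ψ = 0 and H j ψ = ψ (H j–eigenvalue 1); and for each k = l, …, 1, letting Λᵏ denote the partial state right before the block (E⁻ (i_k))^{n_k} is applied, assume E⁺ (i_k) Λᵏ = 0 and H (i_k) Λᵏ = (n_k : ℂ) • Λᵏ (i.e. n_k equals the H (i_k)–eigenvalue Λᵏ_{i_k} of Λᵏ). Let x be the resulting state, built by applying, from the bottom, the chain for J_{l+1}, then (E⁻ (i_l))^{n_l}, then the chain for J_l, …, then (E⁻ (i₁))^{n₁}, then the chain for J₁. Then ⟪x, x⟫ = Π_{k=1}^{l} (n_k !)². -/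
/-- The state obtained by applying, from the bottom, the chain for `J (Fin.last l)` to `Λ`,
then `(Em (iIdx (l-1)))^(n (l-1))`, then the chain for `J (l-1)`, …; `buildFrom k` keeps only the
blocks of index `≥ k`, so `buildFrom 0` is the full state `x` and `buildFrom l` is the bottom
chain state. -/
noncomputable def buildFrom {r : ℕ} {V : Type*} [AddCommGroup V] [Module ℂ V]
    (Em : Fin r → (V →ₗ[ℂ] V)) (l : ℕ) (iIdx : Fin l → Fin r) (n : Fin l → ℕ)
    (J : Fin (l + 1) → List (Fin r)) (Λ : V) (k : ℕ) : V :=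
  ((List.finRange l).drop k).foldr
    (fun k x => chainApp Em (J k.castSucc) ((Em (iIdx k) ^ n k) x))
    (chainApp Em (J (Fin.last l)) Λ)

/-- The partial state to which the chain for the block `J k` is applied. -/
noncomputable def baseOf {r : ℕ} {V : Type*} [AddCommGroup V] [Module ℂ V]
    (Em : Fin r → (V →ₗ[ℂ] V)) (l : ℕ) (iIdx : Fin l → Fin r) (n : Fin l → ℕ)
    (J : Fin (l + 1) → List (Fin r)) (Λ : V) (k : Fin (l + 1)) : V :=
  if h : (k : ℕ) < l then
    (Em (iIdx ⟨k, h⟩) ^ n ⟨k, h⟩) (buildFrom Em l iIdx n J Λ ((k : ℕ) + 1))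
  else Λ

set_option linter.unusedVariables false

section Helpers

variable {r : ℕ} {V : Type*} [NormedAddCommGroup V] [InnerProductSpace ℂ V]
  {Ep Em H : Fin r → (V →ₗ[ℂ] V)}

lemma chain_norm (hadj : ∀ i (x y : V), (inner ℂ (Ep i x) y : ℂ) = inner ℂ x (Em i y))
    (hc : ∀ i (x : V), Ep i (Em i x) = Em i (Ep i x) + H i x) :
    ∀ (J : List (Fin r)) (b : V),
    (∀ t : Fin J.length, Ep (J.get t) (chainApp Em (J.drop ((t:ℕ)+1)) b) = 0 ∧
      H (J.get t) (chainApp Em (J.drop ((t:ℕ)+1)) b) = chainApp Em (J.drop ((t:ℕ)+1)) b) →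
    (inner ℂ (chainApp Em J b) (chainApp Em J b) : ℂ) = inner ℂ b b := by
  intro J
  induction J with
  | nil => intro b _; simp [chainApp]
  | cons j J' ih =>
    intro b hyp
    have h0 := hyp ⟨0, Nat.succ_pos _⟩
    simp only [List.get, List.drop] at h0
    have step : chainApp Em (j :: J') b = Em j (chainApp Em J' b) := rfl
    rw [step, ← hadj, hc, h0.1, map_zero, zero_add, h0.2]
    exact ih b (fun t => by
      have := hyp t.succ
      simpa using this)
end Helpers

section Pow
variable {r : ℕ} {V : Type*} [NormedAddCommGroup V] [InnerProductSpace ℂ V]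
  {Ep Em H : Fin r → (V →ₗ[ℂ] V)}

lemma H_pow (i : Fin r)
    (hH : ∀ x : V, H i (Em i x) = Em i (H i x) - (2:ℂ) • Em i x)
    (ψ : V) (m : ℂ) (hψ : H i ψ = m • ψ) :
    ∀ k : ℕ, H i ((Em i ^ k) ψ) = (m - 2*k) • (Em i ^ k) ψ := by
  intro k
  induction k with
  | zero => simpa using hψ
  | succ k ihk =>
    have h1 : (Em i ^ (k+1)) ψ = Em i ((Em i ^ k) ψ) := by
      rw [pow_succ']; rfl
    rw [h1, hH, ihk, map_smul, ← sub_smul]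
    congr 1
    push_cast; ring

lemma Ep_pow_s9 (i : Fin r)
    (hH : ∀ x : V, H i (Em i x) = Em i (H i x) - (2:ℂ) • Em i x)
    (hc : ∀ x : V, Ep i (Em i x) = Em i (Ep i x) + H i x)
    (ψ : V) (m : ℂ) (h0 : Ep i ψ = 0) (hψ : H i ψ = m • ψ) :
    ∀ k : ℕ, Ep i ((Em i ^ (k+1)) ψ) = (((k:ℂ)+1) * (m - k)) • (Em i ^ k) ψ := by
  intro k
  induction k with
  | zero =>
    have h1 : (Em i ^ 1) ψ = Em i ((Em i ^ 0) ψ) := by rw [pow_succ']; rfl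
    rw [h1, hc, pow_zero, Module.End.one_apply, h0, map_zero, zero_add, hψ]
    simp
  | succ k ihk =>
    have h1 : (Em i ^ (k+2)) ψ = Em i ((Em i ^ (k+1)) ψ) := by rw [pow_succ']; rfl
    rw [h1, hc, ihk, map_smul, H_pow i hH ψ m hψ (k+1)]
    have h2 : (Em i ^ (k+1)) ψ = Em i ((Em i ^ k) ψ) := by rw [pow_succ']; rfl
    rw [h2, ← add_smul]
    congr 1
    push_cast; ring

lemma pow_norm (i : Fin r)
    (hadj : ∀ (x y : V), (inner ℂ (Ep i x) y : ℂ) = inner ℂ x (Em i y))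
    (hH : ∀ x : V, H i (Em i x) = Em i (H i x) - (2:ℂ) • Em i x)
    (hc : ∀ x : V, Ep i (Em i x) = Em i (Ep i x) + H i x)
    (ψ : V) (N : ℕ) (h0 : Ep i ψ = 0) (hψ : H i ψ = (N:ℂ) • ψ) :
    (inner ℂ ((Em i ^ N) ψ) ((Em i ^ N) ψ) : ℂ) =
      ((N.factorial : ℂ))^2 * inner ℂ ψ ψ := by
  have key : ∀ j ≤ N, (inner ℂ ((Em i ^ j) ψ) ((Em i ^ j) ψ) : ℂ) * ((N-j).factorial : ℂ)
      = (j.factorial : ℂ) * (N.factorial : ℂ) * inner ℂ ψ ψ := by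
    intro j
    induction j with
    | zero => intro _; simp [Nat.factorial]; ring
    | succ j ihj =>
      intro hjN
      have hj : j < N := hjN
      have ihj' := ihj (le_of_lt hj)
      have h1 : (Em i ^ (j+1)) ψ = Em i ((Em i ^ j) ψ) := by rw [pow_succ']; rfl
      have h2 : (inner ℂ ((Em i ^ (j+1)) ψ) ((Em i ^ (j+1)) ψ) : ℂ)
          = inner ℂ (Ep i ((Em i ^ (j+1)) ψ)) ((Em i ^ j) ψ) := by
        rw [hadj, ← h1]
      rw [h2, Ep_pow_s9 i hH hc ψ (N:ℂ) h0 hψ j, inner_smul_left]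
      have hconj : (starRingEnd ℂ) (((j:ℂ)+1) * ((N:ℂ) - (j:ℂ))) = ((j:ℂ)+1) * ((N:ℂ) - (j:ℂ)) := by
        simp [map_mul, map_sub, map_add, Complex.conj_natCast]
      rw [hconj]
      have hNj : ((N:ℂ) - (j:ℂ)) = ((N - j : ℕ) : ℂ) := by
        push_cast [Nat.cast_sub (le_of_lt hj)]; ring
      have hfac : ((N - j).factorial : ℂ) = ((N - j : ℕ) : ℂ) * ((N - (j+1)).factorial : ℂ) := by
        have h3 : N - j = (N - (j+1)) + 1 := by omega
        have hN : (N - j).factorial = (N - j) * (N - (j+1)).factorial := by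
          calc (N-j).factorial = ((N-(j+1))+1).factorial := by rw [← h3]
            _ = ((N-(j+1))+1) * (N-(j+1)).factorial := Nat.factorial_succ _
            _ = (N-j) * (N-(j+1)).factorial := by rw [← h3]
        exact_mod_cast hN
      have hfs : ((j+1).factorial : ℂ) = ((j:ℂ)+1) * (j.factorial : ℂ) := by
        rw [Nat.factorial_succ]; push_cast; ring
      rw [hNj, hfs]
      calc ((j:ℂ)+1) * ((N-j:ℕ):ℂ) * inner ℂ ((Em i ^ j) ψ) ((Em i ^ j) ψ) * ((N-(j+1)).factorial : ℂ)
          = ((j:ℂ)+1) * (inner ℂ ((Em i ^ j) ψ) ((Em i ^ j) ψ) * (((N-j:ℕ):ℂ) * ((N-(j+1)).factorial : ℂ))) := by ring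
        _ = ((j:ℂ)+1) * (inner ℂ ((Em i ^ j) ψ) ((Em i ^ j) ψ) * ((N-j).factorial : ℂ)) := by rw [← hfac]
        _ = ((j:ℂ)+1) * ((j.factorial : ℂ) * (N.factorial : ℂ) * inner ℂ ψ ψ) := by rw [ihj']
        _ = ((j:ℂ)+1) * (j.factorial : ℂ) * (N.factorial : ℂ) * inner ℂ ψ ψ := by ring
  have := key N le_rfl
  simp only [Nat.sub_self, Nat.factorial_zero, Nat.cast_one, mul_one] at this
  rw [this]; ring

end Pow


theorem stmt9 {r : ℕ} (A : Fin r → Fin r → ℤ) (hA : ∀ i, A i i = 2)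
    {V : Type*} [NormedAddCommGroup V] [InnerProductSpace ℂ V]
    (Ep Em H : Fin r → (V →ₗ[ℂ] V))
    (hEpEm : ∀ i j, Ep i ∘ₗ Em j - Em j ∘ₗ Ep i = if i = j then H i else 0)
    (hHEp : ∀ i j, H i ∘ₗ Ep j - Ep j ∘ₗ H i = (A j i : ℂ) • Ep j)
    (hHEm : ∀ i j, H i ∘ₗ Em j - Em j ∘ₗ H i = (-(A j i) : ℂ) • Em j)
    (hHH : ∀ i j, H i ∘ₗ H j - H j ∘ₗ H i = 0)
    (hadj : ∀ i (x y : V), (inner ℂ (Ep i x) y : ℂ) = inner ℂ x (Em i y))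
    (lam : Fin r → ℤ) (Λ : V)
    (hΛnorm : (inner ℂ Λ Λ : ℂ) = 1)
    (hEpΛ : ∀ i, Ep i Λ = 0)
    (hHΛ : ∀ i, H i Λ = (lam i : ℂ) • Λ)
    (l : ℕ) (hl : 1 ≤ l)
    (iIdx : Fin l → Fin r) (n : Fin l → ℕ) (hn : ∀ k, 1 ≤ n k)
    (J : Fin (l + 1) → List (Fin r))
    (hblock : ∀ k : Fin l,
        Ep (iIdx k) (buildFrom Em l iIdx n J Λ ((k : ℕ) + 1)) = 0 ∧
        H (iIdx k) (buildFrom Em l iIdx n J Λ ((k : ℕ) + 1)) =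
          (n k : ℂ) • buildFrom Em l iIdx n J Λ ((k : ℕ) + 1))
    (hchain : ∀ k : Fin (l + 1), ∀ t : Fin (J k).length,
        Ep ((J k).get t)
            (chainApp Em ((J k).drop ((t : ℕ) + 1)) (baseOf Em l iIdx n J Λ k)) = 0 ∧
        H ((J k).get t)
            (chainApp Em ((J k).drop ((t : ℕ) + 1)) (baseOf Em l iIdx n J Λ k)) =
          chainApp Em ((J k).drop ((t : ℕ) + 1)) (baseOf Em l iIdx n J Λ k)) :
    (inner ℂ (buildFrom Em l iIdx n J Λ 0) (buildFrom Em l iIdx n J Λ 0) : ℂ) =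
      ∏ k : Fin l, ((Nat.factorial (n k) : ℂ)) ^ 2 := by
  -- pointwise commutator facts
  have hc : ∀ i (x : V), Ep i (Em i x) = Em i (Ep i x) + H i x := by
    intro i x
    have h := congrArg (fun f : V →ₗ[ℂ] V => f x) (hEpEm i i)
    simp only [if_pos rfl, ↓reduceIte, LinearMap.sub_apply, LinearMap.comp_apply] at h
    linear_combination (norm := module) h
  have hH' : ∀ i (x : V), H i (Em i x) = Em i (H i x) - (2:ℂ) • Em i x := by
    intro i x
    have h := congrArg (fun f : V →ₗ[ℂ] V => f x) (hHEm i i)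
    simp only [LinearMap.sub_apply, LinearMap.comp_apply, LinearMap.smul_apply, hA] at h
    have h2 : ((-(2:ℤ)) : ℂ) • Em i x = -((2:ℂ) • Em i x) := by
      norm_num
    rw [h2] at h
    linear_combination (norm := abel) h
  have key : ∀ m k, k + m = l →
      (inner ℂ (buildFrom Em l iIdx n J Λ k) (buildFrom Em l iIdx n J Λ k) : ℂ) =
        (((List.finRange l).drop k).map (fun j => ((n j).factorial : ℂ)^2)).prod := by
    intro m
    induction m with
    | zero =>
      intro k hk
      subst hk
      simp only [Nat.add_zero]
      have hnil : (List.finRange k).drop k = [] :=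
        List.drop_eq_nil_of_le (by simp)
      have hbase : baseOf Em k iIdx n J Λ (Fin.last k) = Λ := by
        simp [baseOf]
      have h1 : buildFrom Em k iIdx n J Λ k = chainApp Em (J (Fin.last k)) Λ := by
        rw [buildFrom, hnil, List.foldr_nil]
      rw [h1]
      have := chain_norm hadj hc (J (Fin.last k)) (baseOf Em k iIdx n J Λ (Fin.last k))
        (hchain (Fin.last k))
      rw [hbase] at this
      rw [this, hΛnorm, hnil]
      simp
    | succ m ih =>
      intro k hk
      have hkl : k < l := by omega
      set kk : Fin l := ⟨k, hkl⟩ with hkk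
      have hdrop : (List.finRange l).drop k = kk :: (List.finRange l).drop (k+1) := by
        rw [List.drop_eq_getElem_cons (by simpa using hkl)]
        congr 1
        apply Fin.ext
        simp [List.getElem_finRange, hkk]
      have hb : baseOf Em l iIdx n J Λ kk.castSucc
          = (Em (iIdx kk) ^ n kk) (buildFrom Em l iIdx n J Λ (k+1)) := by
        rw [baseOf, dif_pos (show ((kk.castSucc : Fin (l+1)) : ℕ) < l by simpa using hkl)]
        rfl
      have hbuild : buildFrom Em l iIdx n J Λ k
          = chainApp Em (J kk.castSucc) (baseOf Em l iIdx n J Λ kk.castSucc) := by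
        rw [hb]
        simp only [buildFrom]
        rw [hdrop, List.foldr_cons]
      rw [hbuild]
      rw [chain_norm hadj hc (J kk.castSucc) _ (hchain kk.castSucc), hb]
      rw [pow_norm (iIdx kk) (hadj (iIdx kk)) (hH' (iIdx kk)) (hc (iIdx kk)) _ (n kk)
        (hblock kk).1 (hblock kk).2]
      rw [ih (k+1) (by omega), hdrop]
      simp
  have h0 := key l 0 (by omega)
  rw [h0]
  rw [Fin.prod_univ_def]
  simp
end

section
/- Theorem 4.2: Assume the minuscule hypothesis. If L₁ and L₂ are lists over Fin r with the same multiset of entries (two paths reaching the same weight) such that v(L₁) ≠ 0 and v(L₂) ≠ 0, then ⟪v(L₁), v(L₂)⟫ = 1. -/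
namespace Stmt11Aux


variable {r : ℕ} {V : Type*} [NormedAddCommGroup V] [InnerProductSpace ℂ V]

def vv (Em : Fin r → (V →ₗ[ℂ] V)) (Λ : V) (L : List (Fin r)) : V :=
  L.foldr (fun j y => Em j y) Λ

def ww (A : Fin r → Fin r → ℤ) (lam : Fin r → ℤ) (L : List (Fin r)) (i : Fin r) : ℤ :=
  lam i - (L.map (fun j => A j i)).sum

lemma vv_cons (Em : Fin r → (V →ₗ[ℂ] V)) (Λ : V) (j : Fin r) (M : List (Fin r)) :
    vv Em Λ (j :: M) = Em j (vv Em Λ M) := rfl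

lemma ww_cons (A : Fin r → Fin r → ℤ) (lam : Fin r → ℤ) (j : Fin r) (M : List (Fin r)) (i : Fin r) :
    ww A lam (j :: M) i = ww A lam M i - A j i := by
  simp [ww]; ring

lemma sum_of_multiset_add_singleton (f : Fin r → ℤ) {N M : List (Fin r)} {i : Fin r}
    (h : (↑N : Multiset (Fin r)) + {i} = ↑M) :
    (M.map f).sum = (N.map f).sum + f i := by
  have := congrArg (fun s : Multiset (Fin r) => (s.map f).sum) h
  simpa using this.symm

lemma weight (A : Fin r → Fin r → ℤ) (Em H : Fin r → (V →ₗ[ℂ] V)) (lam : Fin r → ℤ) (Λ : V)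
    (hHEm : ∀ i j, H i ∘ₗ Em j - Em j ∘ₗ H i = (-(A j i) : ℂ) • Em j)
    (hHΛ : ∀ i, H i Λ = (lam i : ℂ) • Λ) (L : List (Fin r)) (i : Fin r) :
    H i (vv Em Λ L) = ((ww A lam L i : ℤ) : ℂ) • vv Em Λ L := by
  induction L with
  | nil => simpa [vv, ww] using hHΛ i
  | cons j M ih =>
    have h := congrArg (fun f : V →ₗ[ℂ] V => f (vv Em Λ M)) (hHEm i j)
    simp only [LinearMap.sub_apply, LinearMap.comp_apply, LinearMap.smul_apply] at h
    have h2 : H i (Em j (vv Em Λ M)) =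
        Em j (H i (vv Em Λ M)) + (-(A j i) : ℂ) • Em j (vv Em Λ M) := by
      rw [← h]; abel
    rw [vv_cons, h2, ih, map_smul, ww_cons]
    push_cast
    rw [sub_smul, neg_smul]
    abel



attribute [local instance] Classical.propDecidable

variable {r : ℕ} {V : Type*} [NormedAddCommGroup V] [InnerProductSpace ℂ V]

omit [InnerProductSpace ℂ V] in
lemma sum_filter_map_ne_zero {α : Type*} (f : α → V) (l : List α) :
    (((l.filter (fun a => decide (f a ≠ 0))).map f)).sum = (l.map f).sum := by
  induction l with
  | nil => simp
  | cons a l ih =>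
    rw [List.filter_cons]
    by_cases h : f a = 0
    · rw [if_neg (by simp [h]), ih, List.map_cons, List.sum_cons, h, zero_add]
    · rw [if_pos (by simp [h])]
      simp only [List.map_cons, List.sum_cons, ih]

omit [InnerProductSpace ℂ V] in
lemma mem_filter_ne_zero {α : Type*} {f : α → V} {l : List α} {a : α}
    (h : a ∈ l.filter (fun a => decide (f a ≠ 0))) : a ∈ l ∧ f a ≠ 0 := by
  simpa [List.mem_filter] using h


lemma EpV (A : Fin r → Fin r → ℤ) (hA : ∀ i, A i i = 2)
    (Ep Em H : Fin r → (V →ₗ[ℂ] V)) (lam : Fin r → ℤ) (Λ : V)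
    (hEpEm : ∀ i j, Ep i ∘ₗ Em j - Em j ∘ₗ Ep i = if i = j then H i else 0)
    (hHEm : ∀ i j, H i ∘ₗ Em j - Em j ∘ₗ H i = (-(A j i) : ℂ) • Em j)
    (hEpΛ : ∀ i, Ep i Λ = 0)
    (hHΛ : ∀ i, H i Λ = (lam i : ℂ) • Λ)
    (hmin : ∀ L : List (Fin r), L.foldr (fun j y => Em j y) Λ ≠ 0 →
        ∀ i, (lam i - (L.map (fun j => A j i)).sum) ∈ ({-1, 0, 1} : Set ℤ)) :
    ∀ (L : List (Fin r)) (i : Fin r), vv Em Λ L ≠ 0 →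
      ∃ T : List (List (Fin r)),
        (∀ N ∈ T, vv Em Λ N ≠ 0 ∧ (↑N : Multiset (Fin r)) + {i} = (↑L : Multiset (Fin r))) ∧
        Ep i (vv Em Λ L) = (T.map (vv Em Λ)).sum := by
  have hmin' : ∀ L : List (Fin r), vv Em Λ L ≠ 0 → ∀ i, ww A lam L i ∈ ({-1, 0, 1} : Set ℤ) :=
    fun L h i => hmin L h i
  intro L
  induction L with
  | nil =>
    intro i _
    exact ⟨[], by simp, by simpa [vv] using hEpΛ i⟩
  | cons j M ih =>
    intro i hL
    have hM : vv Em Λ M ≠ 0 := by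
      intro h; exact hL (by simp [vv_cons, h])
    obtain ⟨T, hT, hsum⟩ := ih i hM
    have hc := congrArg (fun f : V →ₗ[ℂ] V => f (vv Em Λ M)) (hEpEm i j)
    simp only [LinearMap.sub_apply, LinearMap.comp_apply] at hc
    -- the filtered list of (j :: N), N ∈ T
    set T' : List (List (Fin r)) :=
      (T.map (fun N => j :: N)).filter (fun N => decide (vv Em Λ N ≠ 0)) with hT'
    have hT'mem : ∀ N ∈ T', vv Em Λ N ≠ 0 ∧
        (↑N : Multiset (Fin r)) + {i} = (↑(j :: M) : Multiset (Fin r)) := by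
      intro N hN
      obtain ⟨hN1, hN2⟩ := mem_filter_ne_zero hN
      obtain ⟨N', hN'T, rfl⟩ := List.mem_map.1 hN1
      refine ⟨hN2, ?_⟩
      have := (hT N' hN'T).2
      simp only [← Multiset.cons_coe, Multiset.cons_add, this]
    have hT'sum : (T'.map (vv Em Λ)).sum = Em j ((T.map (vv Em Λ)).sum) := by
      rw [hT', sum_filter_map_ne_zero, List.map_map, map_list_sum, List.map_map]
      rfl
    by_cases hij : i = j
    · subst hij
      -- coefficient: ww M i = 1
      have h1 := hmin' M hM i
      have h2 := hmin' (i :: M) hL i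
      rw [ww_cons, hA i] at h2
      simp only [Set.mem_insert_iff, Set.mem_singleton_iff] at h1 h2
      have hw1 : ww A lam M i = 1 := by omega
      refine ⟨M :: T', ?_, ?_⟩
      · intro N hN
        rcases List.mem_cons.1 hN with rfl | hN
        · exact ⟨hM, by rw [← Multiset.cons_coe, ← Multiset.singleton_add, add_comm]⟩
        · exact hT'mem N hN
      · -- Ep i (Em i vM) = Em i (Ep i vM) + H i vM
        have hIf : (if i = i then H i else 0) = H i := if_pos rfl
        rw [hIf] at hc
        have : Ep i (vv Em Λ (i :: M)) = Em i (Ep i (vv Em Λ M)) + H i (vv Em Λ M) := by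
          rw [vv_cons, ← hc]; abel
        rw [this, weight A Em H lam Λ hHEm hHΛ, hw1, hsum, List.map_cons, List.sum_cons,
          hT'sum]
        push_cast
        rw [one_smul]
        abel
    · refine ⟨T', hT'mem, ?_⟩
      rw [if_neg hij] at hc
      have : Ep i (vv Em Λ (j :: M)) = Em j (Ep i (vv Em Λ M)) := by
        rw [vv_cons]
        have : Ep i (Em j (vv Em Λ M)) - Em j (Ep i (vv Em Λ M)) = 0 := hc
        rw [← sub_eq_zero]; exact this
      rw [this, hsum, hT'sum]


lemma adj_swap (Ep Em : Fin r → (V →ₗ[ℂ] V))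
    (hadj : ∀ i (x y : V), (inner ℂ (Ep i x) y : ℂ) = inner ℂ x (Em i y))
    (i : Fin r) (x y : V) : (inner ℂ (Em i x) y : ℂ) = inner ℂ x (Ep i y) := by
  rw [← inner_conj_symm, ← hadj, inner_conj_symm]

lemma inner_list_sum_right (x : V) (l : List V) :
    (inner ℂ x l.sum : ℂ) = (l.map (fun y => (inner ℂ x y : ℂ))).sum := by
  induction l with
  | nil => simp
  | cons a l ih => simp [inner_add_right, ih]

lemma inner_list_sum_left (l : List V) (y : V) :
    (inner ℂ l.sum y : ℂ) = (l.map (fun x => (inner ℂ x y : ℂ))).sum := by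
  induction l with
  | nil => simp
  | cons a l ih => simp [inner_add_left, ih]

lemma key2 (A : Fin r → Fin r → ℤ) (hA : ∀ i, A i i = 2)
    (Ep Em H : Fin r → (V →ₗ[ℂ] V)) (lam : Fin r → ℤ) (Λ : V)
    (hEpEm : ∀ i j, Ep i ∘ₗ Em j - Em j ∘ₗ Ep i = if i = j then H i else 0)
    (hHEm : ∀ i j, H i ∘ₗ Em j - Em j ∘ₗ H i = (-(A j i) : ℂ) • Em j)
    (hHΛ : ∀ i, H i Λ = (lam i : ℂ) • Λ)
    (hmin : ∀ L : List (Fin r), L.foldr (fun j y => Em j y) Λ ≠ 0 →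
        ∀ i, (lam i - (L.map (fun j => A j i)).sum) ∈ ({-1, 0, 1} : Set ℤ))
    (L : List (Fin r)) (i : Fin r) (hL : vv Em Λ L ≠ 0) (hw : ww A lam L i = -1) :
    Em i (Ep i (vv Em Λ L)) = vv Em Λ L := by
  have h0 : vv Em Λ (i :: L) = 0 := by
    by_contra h
    have h3 : ww A lam (i :: L) i ∈ ({-1, 0, 1} : Set ℤ) := hmin (i :: L) h i
    rw [ww_cons, hA i, hw] at h3
    simp only [Set.mem_insert_iff, Set.mem_singleton_iff] at h3
    omega
  have hc := congrArg (fun f : V →ₗ[ℂ] V => f (vv Em Λ L)) (hEpEm i i)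
  simp only [LinearMap.sub_apply, LinearMap.comp_apply, if_pos rfl, if_true] at hc
  have hEmL : Em i (vv Em Λ L) = 0 := h0
  rw [hEmL, map_zero, zero_sub, weight A Em H lam Λ hHEm hHΛ, hw] at hc
  have := congrArg Neg.neg hc
  rw [neg_neg] at this
  rw [this]
  push_cast
  rw [neg_smul, one_smul, neg_neg]

lemma norm_one (A : Fin r → Fin r → ℤ) (hA : ∀ i, A i i = 2)
    (Ep Em H : Fin r → (V →ₗ[ℂ] V)) (lam : Fin r → ℤ) (Λ : V)
    (hEpEm : ∀ i j, Ep i ∘ₗ Em j - Em j ∘ₗ Ep i = if i = j then H i else 0)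
    (hHEm : ∀ i j, H i ∘ₗ Em j - Em j ∘ₗ H i = (-(A j i) : ℂ) • Em j)
    (hadj : ∀ i (x y : V), (inner ℂ (Ep i x) y : ℂ) = inner ℂ x (Em i y))
    (hΛnorm : (inner ℂ Λ Λ : ℂ) = 1)
    (hEpΛ : ∀ i, Ep i Λ = 0)
    (hHΛ : ∀ i, H i Λ = (lam i : ℂ) • Λ)
    (hmin : ∀ L : List (Fin r), L.foldr (fun j y => Em j y) Λ ≠ 0 →
        ∀ i, (lam i - (L.map (fun j => A j i)).sum) ∈ ({-1, 0, 1} : Set ℤ)) :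
    ∀ L : List (Fin r), vv Em Λ L ≠ 0 → (inner ℂ (vv Em Λ L) (vv Em Λ L) : ℂ) = 1 := by
  have hmin' : ∀ L : List (Fin r), vv Em Λ L ≠ 0 → ∀ i, ww A lam L i ∈ ({-1, 0, 1} : Set ℤ) :=
    fun L h i => hmin L h i
  intro L
  induction L with
  | nil => intro _; exact hΛnorm
  | cons i M ih =>
    intro hL
    have hM : vv Em Λ M ≠ 0 := by intro h; exact hL (by simp [vv_cons, h])
    -- ww M i = 1
    have h1 := hmin' M hM i
    have h2 := hmin' (i :: M) hL i
    rw [ww_cons, hA i] at h2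
    simp only [Set.mem_insert_iff, Set.mem_singleton_iff] at h1 h2
    have hw1 : ww A lam M i = 1 := by omega
    -- Ep i (vv M) = 0
    obtain ⟨T, hT, hsum⟩ := EpV A hA Ep Em H lam Λ hEpEm hHEm hEpΛ hHΛ hmin M i hM
    have hTnil : T = [] := by
      cases T with
      | nil => rfl
      | cons N T' =>
        exfalso
        obtain ⟨hN0, hNm⟩ := hT N List.mem_cons_self
        have h3 := hmin' N hN0 i
        have := sum_of_multiset_add_singleton (fun j => A j i) hNm
        have hwN : ww A lam N i = 3 := by
          have h4 : (M.map (fun j => A j i)).sum = (N.map (fun j => A j i)).sum + A i i := this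
          have hAi := hA i
          simp only [ww] at hw1 ⊢
          omega
        rw [hwN] at h3
        simp only [Set.mem_insert_iff, Set.mem_singleton_iff] at h3
        omega
    have hEp0 : Ep i (vv Em Λ M) = 0 := by rw [hsum, hTnil]; simp
    -- commutator
    have hc := congrArg (fun f : V →ₗ[ℂ] V => f (vv Em Λ M)) (hEpEm i i)
    simp only [LinearMap.sub_apply, LinearMap.comp_apply, if_pos rfl, if_true] at hc
    rw [hEp0, map_zero, sub_zero, weight A Em H lam Λ hHEm hHΛ, hw1] at hc
    have key : Ep i (vv Em Λ (i :: M)) = vv Em Λ M := by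
      rw [vv_cons, hc]
      push_cast
      rw [one_smul]
    calc (inner ℂ (vv Em Λ (i :: M)) (vv Em Λ (i :: M)) : ℂ)
        = inner ℂ (vv Em Λ M) (Ep i (vv Em Λ (i :: M))) := by
          rw [vv_cons, adj_swap Ep Em hadj]
      _ = inner ℂ (vv Em Λ M) (vv Em Λ M) := by rw [key]
      _ = 1 := ih hM

lemma ww_perm (A : Fin r → Fin r → ℤ) (lam : Fin r → ℤ) {L₁ L₂ : List (Fin r)}
    (hm : (↑L₁ : Multiset (Fin r)) = ↑L₂) (i : Fin r) :
    ww A lam L₁ i = ww A lam L₂ i := by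
  have h := Multiset.coe_eq_coe.1 hm
  simp [ww, (h.map _).sum_eq]

end Stmt11Aux


open Stmt11Aux in
theorem stmt11 {r : ℕ} (A : Fin r → Fin r → ℤ) (hA : ∀ i, A i i = 2)
    {V : Type*} [NormedAddCommGroup V] [InnerProductSpace ℂ V]
    (Ep Em H : Fin r → (V →ₗ[ℂ] V))
    (hEpEm : ∀ i j, Ep i ∘ₗ Em j - Em j ∘ₗ Ep i = if i = j then H i else 0)
    (hHEp : ∀ i j, H i ∘ₗ Ep j - Ep j ∘ₗ H i = (A j i : ℂ) • Ep j)
    (hHEm : ∀ i j, H i ∘ₗ Em j - Em j ∘ₗ H i = (-(A j i) : ℂ) • Em j)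
    (hHH : ∀ i j, H i ∘ₗ H j - H j ∘ₗ H i = 0)
    (hadj : ∀ i (x y : V), (inner ℂ (Ep i x) y : ℂ) = inner ℂ x (Em i y))
    (lam : Fin r → ℤ) (Λ : V)
    (hΛnorm : (inner ℂ Λ Λ : ℂ) = 1)
    (hEpΛ : ∀ i, Ep i Λ = 0)
    (hHΛ : ∀ i, H i Λ = (lam i : ℂ) • Λ)
    (hmin : ∀ L : List (Fin r), L.foldr (fun j y => Em j y) Λ ≠ 0 →
        ∀ i, (lam i - (L.map (fun j => A j i)).sum) ∈ ({-1, 0, 1} : Set ℤ))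
    (L₁ L₂ : List (Fin r)) (hmult : (L₁ : Multiset (Fin r)) = (L₂ : Multiset (Fin r)))
    (h1 : L₁.foldr (fun j y => Em j y) Λ ≠ 0)
    (h2 : L₂.foldr (fun j y => Em j y) Λ ≠ 0) :
    (inner ℂ (L₁.foldr (fun j y => Em j y) Λ) (L₂.foldr (fun j y => Em j y) Λ) : ℂ) = 1 := by
  have hmin' : ∀ L : List (Fin r), vv Em Λ L ≠ 0 → ∀ i, ww A lam L i ∈ ({-1, 0, 1} : Set ℤ) :=
    fun L h i => hmin L h i
  have main : ∀ n (K₁ K₂ : List (Fin r)), K₁.length = n →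
      (↑K₁ : Multiset (Fin r)) = ↑K₂ →
      vv Em Λ K₁ ≠ 0 → vv Em Λ K₂ ≠ 0 →
      (inner ℂ (vv Em Λ K₁) (vv Em Λ K₂) : ℂ) = 1 := by
    intro n
    induction n using Nat.strong_induction_on with
    | _ n ih =>
      intro K₁ K₂ hlen hm hk1 hk2
      cases K₁ with
      | nil =>
        have hnil : K₂ = [] := by
          have := congrArg Multiset.card hm
          simp only [Multiset.coe_card, List.length_nil] at this
          exact List.eq_nil_of_length_eq_zero this.symm
        subst hnil
        exact hΛnorm
      | cons i M₁ =>
        have hM₁ : vv Em Λ M₁ ≠ 0 := by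
          intro h; exact hk1 (by simp [vv_cons, h])
        have hlt : M₁.length < n := by
          simp only [List.length_cons] at hlen; omega
        -- weights
        have hw1 := hmin' M₁ hM₁ i
        have hw2 := hmin' (i :: M₁) hk1 i
        rw [ww_cons, hA i] at hw2
        simp only [Set.mem_insert_iff, Set.mem_singleton_iff] at hw1 hw2
        have hwM : ww A lam M₁ i = 1 := by omega
        have hwL2 : ww A lam K₂ i = -1 := by
          rw [← ww_perm A lam hm i, ww_cons, hA i, hwM]
          norm_num
        obtain ⟨T, hT, hsum⟩ := EpV A hA Ep Em H lam Λ hEpEm hHEm hEpΛ hHΛ hmin K₂ i hk2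
        have hNprop : ∀ N ∈ T, vv Em Λ N ≠ 0 ∧ (↑N : Multiset (Fin r)) = ↑M₁ ∧
            N.length = M₁.length := by
          intro N hN
          obtain ⟨hN0, hNm⟩ := hT N hN
          have heq : (↑N : Multiset (Fin r)) + {i} = ↑M₁ + {i} := by
            rw [hNm, ← hm, ← Multiset.cons_coe, ← Multiset.singleton_add, add_comm]
          have hNM := add_right_cancel heq
          refine ⟨hN0, hNM, ?_⟩
          have := congrArg Multiset.card hNM
          simpa using this
        have hval : ∀ N ∈ T, (inner ℂ (vv Em Λ M₁) (vv Em Λ N) : ℂ) = 1 := by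
          intro N hN
          exact ih M₁.length hlt M₁ N rfl (hNprop N hN).2.1.symm hM₁ (hNprop N hN).1
        have e1 : (inner ℂ (vv Em Λ (i :: M₁)) (vv Em Λ K₂) : ℂ) = (T.length : ℂ) := by
          rw [vv_cons, adj_swap Ep Em hadj, hsum, inner_list_sum_right, List.map_map]
          rw [List.sum_eq_card_nsmul _ 1 (by
            intro x hx
            obtain ⟨N, hN, rfl⟩ := List.mem_map.1 hx
            exact hval N hN)]
          simp
        have e2 : (inner ℂ (Ep i (vv Em Λ K₂)) (Ep i (vv Em Λ K₂)) : ℂ) = 1 := by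
          rw [hadj i, key2 A hA Ep Em H lam Λ hEpEm hHEm hHΛ hmin K₂ i hk2 hwL2]
          exact norm_one A hA Ep Em H lam Λ hEpEm hHEm hadj hΛnorm hEpΛ hHΛ hmin K₂ hk2
        have e3 : (inner ℂ (Ep i (vv Em Λ K₂)) (Ep i (vv Em Λ K₂)) : ℂ) =
            (T.length : ℂ) * (T.length : ℂ) := by
          rw [hsum, inner_list_sum_left, List.map_map]
          rw [List.sum_eq_card_nsmul _ ((T.length : ℕ) : ℂ) (by
            intro x hx
            obtain ⟨N, hN, rfl⟩ := List.mem_map.1 hx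
            simp only [Function.comp]
            rw [inner_list_sum_right, List.map_map]
            rw [List.sum_eq_card_nsmul _ 1 (by
              intro y hy
              obtain ⟨N', hN', rfl⟩ := List.mem_map.1 hy
              exact ih M₁.length hlt N N' (hNprop N hN).2.2 (by
                rw [(hNprop N hN).2.1, (hNprop N' hN').2.1]) (hNprop N hN).1 (hNprop N' hN').1)]
            simp)]
          simp [mul_comm]
        have hT1 : T.length = 1 := by
          have hcc : ((T.length * T.length : ℕ) : ℂ) = ((1 : ℕ) : ℂ) := by
            push_cast
            rw [← e3, e2]
          have := Nat.cast_injective (R := ℂ) hcc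
          exact Nat.eq_one_of_mul_eq_one_right this
        show (inner ℂ (vv Em Λ (i :: M₁)) (vv Em Λ K₂) : ℂ) = 1
        rw [e1, hT1]
        norm_num
  exact main L₁.length L₁ L₂ rfl hmult h1 h2
end

section
/- Norms in minuscule representations (the ⟨λ'''|λ'''⟩ = 1 claim): Assume the minuscule hypothesis. Then every nonzero chain state has norm one: for every list L over Fin r with v(L) ≠ 0, one has ⟪v(L), v(L)⟫ = 1. -/
theorem stmt12 {r : ℕ} (A : Fin r → Fin r → ℤ) (hA : ∀ i, A i i = 2)
    {V : Type*} [NormedAddCommGroup V] [InnerProductSpace ℂ V]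
    (Ep Em H : Fin r → (V →ₗ[ℂ] V))
    (hEpEm : ∀ i j, Ep i ∘ₗ Em j - Em j ∘ₗ Ep i = if i = j then H i else 0)
    (hHEp : ∀ i j, H i ∘ₗ Ep j - Ep j ∘ₗ H i = (A j i : ℂ) • Ep j)
    (hHEm : ∀ i j, H i ∘ₗ Em j - Em j ∘ₗ H i = (-(A j i) : ℂ) • Em j)
    (hHH : ∀ i j, H i ∘ₗ H j - H j ∘ₗ H i = 0)
    (hadj : ∀ i (x y : V), (inner ℂ (Ep i x) y : ℂ) = inner ℂ x (Em i y))
    (lam : Fin r → ℤ) (Λ : V)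
    (hΛnorm : (inner ℂ Λ Λ : ℂ) = 1)
    (hEpΛ : ∀ i, Ep i Λ = 0)
    (hHΛ : ∀ i, H i Λ = (lam i : ℂ) • Λ)
    (hmin : ∀ L : List (Fin r), L.foldr (fun j y => Em j y) Λ ≠ 0 →
        ∀ i, (lam i - (L.map (fun j => A j i)).sum) ∈ ({-1, 0, 1} : Set ℤ))
    (L : List (Fin r)) (hL : L.foldr (fun j y => Em j y) Λ ≠ 0) :
    (inner ℂ (L.foldr (fun j y => Em j y) Λ) (L.foldr (fun j y => Em j y) Λ) : ℂ) = 1 := by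
  -- eigenvector property of chain states
  have heig : ∀ (M : List (Fin r)) (i : Fin r),
      H i (M.foldr (fun j y => Em j y) Λ) =
        (((lam i - (M.map (fun j => A j i)).sum : ℤ) : ℂ)) •
          (M.foldr (fun j y => Em j y) Λ) := by
    intro M i
    induction M with
    | nil => simpa using hHΛ i
    | cons j t ih =>
      have hcomm := congrArg (fun f => f (t.foldr (fun j y => Em j y) Λ)) (hHEm i j)
      simp only [LinearMap.sub_apply, LinearMap.comp_apply, LinearMap.smul_apply] at hcomm
      have h1 : H i (Em j (t.foldr (fun j y => Em j y) Λ)) =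
          Em j (H i (t.foldr (fun j y => Em j y) Λ)) +
            ((-(A j i) : ℂ)) • Em j (t.foldr (fun j y => Em j y) Λ) := by
        rw [← hcomm]; abel
      simp only [List.foldr_cons, List.map_cons, List.sum_cons]
      rw [h1, ih, map_smul]
      push_cast
      module
  -- adjointness, other direction
  have adj2 : ∀ (i : Fin r) (x y : V), (inner ℂ (Em i x) y : ℂ) = inner ℂ x (Ep i y) := by
    intro i x y
    have h := congrArg (starRingEnd ℂ) (hadj i y x)
    rw [inner_conj_symm, inner_conj_symm] at h
    exact h.symm
  -- commutator pointwise
  have hc : ∀ (i : Fin r) (x : V), Ep i (Em i x) = Em i (Ep i x) + H i x := by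
    intro i x
    have := congrArg (fun f => f x) (hEpEm i i)
    simp only [LinearMap.sub_apply, LinearMap.comp_apply, eq_self_iff_true, if_true] at this
    rw [← this]; abel
  induction L with
  | nil => simpa using hΛnorm
  | cons i t ih =>
    have hL' : Em i (t.foldr (fun j y => Em j y) Λ) ≠ 0 := by
      simpa using hL
    set w : V := t.foldr (fun j y => Em j y) Λ with hwdef
    have hw0 : w ≠ 0 := by
      intro h
      apply hL'
      rw [h, map_zero]
    have hn : (inner ℂ w w : ℂ) = 1 := ih hw0
    set c' : ℤ := lam i - (t.map (fun j => A j i)).sum with hc'def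
    have h1 : c' ∈ ({-1, 0, 1} : Set ℤ) := hmin t hw0 i
    have h2 : lam i - (((i :: t).map (fun j => A j i)).sum) ∈ ({-1, 0, 1} : Set ℤ) :=
      hmin (i :: t) hL i
    simp only [List.map_cons, List.sum_cons, hA i] at h2
    simp only [Set.mem_insert_iff, Set.mem_singleton_iff] at h1 h2
    have hc1 : c' = 1 := by omega
    -- H i w = w and H i (Em i w) = - Em i w
    have hHw : H i w = w := by
      have := heig t i
      rw [← hc'def, hc1] at this
      simpa using this
    have hHm : H i (Em i w) = -(Em i w) := by
      have := heig (i :: t) i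
      simp only [List.foldr_cons, List.map_cons, List.sum_cons, hA i] at this
      rw [show lam i - (2 + (t.map (fun j => A j i)).sum) = c' - 2 by rw [hc'def]; ring,
        hc1] at this
      norm_num at this
      simpa using this
    -- Em i (Em i w) = 0
    have hEmm : Em i (Em i w) = 0 := by
      by_contra h
      have h3 := hmin (i :: i :: t) (by simpa using h) i
      simp only [List.map_cons, List.sum_cons, hA i, Set.mem_insert_iff,
        Set.mem_singleton_iff] at h3
      omega
    set m : V := Em i w with hmdef
    set p : V := Ep i w with hpdef
    have hApm : Ep i m = Em i p + w := by
      rw [hmdef, hc i w, hHw, hpdef]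
    -- key identity 1 : ⟪m,m⟫ = ⟪p,p⟫ + 1
    have key1 : (inner ℂ m m : ℂ) = inner ℂ p p + 1 := by
      rw [hmdef]
      rw [adj2 i w (Em i w), ← hmdef, hApm, inner_add_right, ← hadj i w p, hn, hpdef]
    -- key identity 2 : ⟪Em i p, Em i p⟫ + ⟪p,p⟫ = 0
    have key2 : (inner ℂ (Em i p) (Em i p) : ℂ) + inner ℂ p p = 0 := by
      have h0 : (inner ℂ (Em i m) (Em i m) : ℂ) = 0 := by
        rw [hmdef, hEmm]; simp
      have hEpEmm : Ep i (Em i m) = Em i (Em i p) := by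
        rw [hc i m, hApm, map_add, hmdef, hHm]
        abel
      have e1 : (inner ℂ (Em i p) (Em i p) : ℂ) + inner ℂ p p
          = inner ℂ (Ep i m) (Em i p) := by
        rw [hApm, inner_add_left, ← hadj i w p, ← hpdef]
      have e2 : (inner ℂ (Ep i m) (Em i p) : ℂ) = inner ℂ m (Em i (Em i p)) :=
        hadj i m (Em i p)
      have e3 : (inner ℂ m (Em i (Em i p)) : ℂ) = inner ℂ m (Ep i (Em i m)) := by
        rw [hEpEmm]
      have e4 : (inner ℂ m (Ep i (Em i m)) : ℂ) = inner ℂ (Em i m) (Em i m) :=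
        (adj2 i m (Em i m)).symm
      rw [e1, e2, e3, e4, h0]
    -- positivity forces p = 0
    have hp0 : p = 0 := by
      rw [inner_self_eq_norm_sq_to_K, inner_self_eq_norm_sq_to_K] at key2
      have h4 : (‖Em i p‖ : ℝ) ^ 2 + (‖p‖ : ℝ) ^ 2 = 0 := by
        norm_cast at key2
        exact RCLike.ofReal_eq_zero.mp key2
      have h5 : ‖p‖ = 0 := by nlinarith [norm_nonneg (Em i p), norm_nonneg p]
      exact norm_eq_zero.mp h5
    have : (inner ℂ m m : ℂ) = 1 := by
      rw [key1, hp0]; simp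
    simpa [hmdef] using this
end

section
/- Minuscule contraction lemma (step (m2) in the proof of Theorem 4.2): Assume the minuscule hypothesis. Let i ∈ Fin r and let L be a list over Fin r such that E⁺ i (v(L)) = 0 and v(i :: L) ≠ 0 (i.e. E⁻ i (v(L)) ≠ 0). Then E⁺ i (v(i :: L)) = v(L); equivalently, E⁺ i (E⁻ i (v(L))) = v(L). -/
theorem stmt13 {r : ℕ} (A : Fin r → Fin r → ℤ) (hA : ∀ i, A i i = 2)
    {V : Type*} [NormedAddCommGroup V] [InnerProductSpace ℂ V]
    (Ep Em H : Fin r → (V →ₗ[ℂ] V))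
    (hEpEm : ∀ i j, Ep i ∘ₗ Em j - Em j ∘ₗ Ep i = if i = j then H i else 0)
    (hHEp : ∀ i j, H i ∘ₗ Ep j - Ep j ∘ₗ H i = (A j i : ℂ) • Ep j)
    (hHEm : ∀ i j, H i ∘ₗ Em j - Em j ∘ₗ H i = (-(A j i) : ℂ) • Em j)
    (hHH : ∀ i j, H i ∘ₗ H j - H j ∘ₗ H i = 0)
    (hadj : ∀ i (x y : V), (inner ℂ (Ep i x) y : ℂ) = inner ℂ x (Em i y))
    (lam : Fin r → ℤ) (Λ : V)
    (hΛnorm : (inner ℂ Λ Λ : ℂ) = 1)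
    (hEpΛ : ∀ i, Ep i Λ = 0)
    (hHΛ : ∀ i, H i Λ = (lam i : ℂ) • Λ)
    (hmin : ∀ L : List (Fin r), L.foldr (fun j y => Em j y) Λ ≠ 0 →
        ∀ i, (lam i - (L.map (fun j => A j i)).sum) ∈ ({-1, 0, 1} : Set ℤ))
    (i : Fin r) (L : List (Fin r))
    (h0 : Ep i (L.foldr (fun j y => Em j y) Λ) = 0)
    (hne : ((i :: L) : List (Fin r)).foldr (fun j y => Em j y) Λ ≠ 0) :
    Ep i (((i :: L) : List (Fin r)).foldr (fun j y => Em j y) Λ) =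
      L.foldr (fun j y => Em j y) Λ := by
  -- eigenvalue lemma
  have key : ∀ (M : List (Fin r)) (k : Fin r),
      H k (M.foldr (fun j y => Em j y) Λ)
        = ((lam k - (M.map (fun j => A j k)).sum : ℤ) : ℂ) •
            M.foldr (fun j y => Em j y) Λ := by
    intro M k
    induction M with
    | nil => simpa using hHΛ k
    | cons j T ih =>
        have hc := congrArg (fun f : V →ₗ[ℂ] V => f (T.foldr (fun j y => Em j y) Λ)) (hHEm k j)
        simp only [LinearMap.sub_apply, LinearMap.comp_apply, LinearMap.smul_apply] at hc
        have : H k (Em j (T.foldr (fun j y => Em j y) Λ))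
            = Em j (H k (T.foldr (fun j y => Em j y) Λ))
              + (-(A j k) : ℂ) • Em j (T.foldr (fun j y => Em j y) Λ) := by
          linear_combination (norm := module) hc
        simp only [List.foldr_cons, this, ih, map_smul, List.map_cons, List.sum_cons]
        push_cast
        module
  set v := L.foldr (fun j y => Em j y) Λ with hv
  have hvne : v ≠ 0 := by
    intro h
    apply hne
    simp [List.foldr_cons, ← hv, h]
  have h1 := hmin L hvne i
  have h2 := hmin (i :: L) hne i
  simp only [List.map_cons, List.sum_cons, hA i] at h2
  have hc1 : lam i - (L.map (fun j => A j i)).sum = 1 := by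
    simp only [Set.mem_insert_iff, Set.mem_singleton_iff] at h1 h2
    omega
  have hcomm := congrArg (fun f : V →ₗ[ℂ] V => f v) (hEpEm i i)
  simp only [LinearMap.sub_apply, LinearMap.comp_apply, if_pos rfl, if_true] at hcomm
  have : Ep i (Em i v) = Em i (Ep i v) + H i v := by
    linear_combination (norm := module) hcomm
  rw [List.foldr_cons, ← hv, this, h0, key L i, ← hv, hc1]
  simp
end

section
/- G₂ computation (Appendix A, the state of weight (−1,1)): In the G₂ specialization, ⟪v([0, 0, 1]), v([0, 0, 1])⟫ = 12; that is, the state E⁻₁E⁻₁E⁻₂Λ of level 3 has squared norm 12. -/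
theorem stmt14 {V : Type*} [NormedAddCommGroup V] [InnerProductSpace ℂ V]
    (A : Fin 2 → Fin 2 → ℤ)
    (hA00 : A 0 0 = 2) (hA01 : A 0 1 = -1) (hA10 : A 1 0 = -3) (hA11 : A 1 1 = 2)
    (Ep Em H : Fin 2 → (V →ₗ[ℂ] V))
    (hEpEm : ∀ i j, Ep i ∘ₗ Em j - Em j ∘ₗ Ep i = if i = j then H i else 0)
    (hHEp : ∀ i j, H i ∘ₗ Ep j - Ep j ∘ₗ H i = (A j i : ℂ) • Ep j)
    (hHEm : ∀ i j, H i ∘ₗ Em j - Em j ∘ₗ H i = (-(A j i) : ℂ) • Em j)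
    (hHH : ∀ i j, H i ∘ₗ H j - H j ∘ₗ H i = 0)
    (hadj : ∀ i (x y : V), (inner ℂ (Ep i x) y : ℂ) = inner ℂ x (Em i y))
    (lam : Fin 2 → ℤ) (hlam0 : lam 0 = 0) (hlam1 : lam 1 = 1)
    (Λ : V)
    (hΛnorm : (inner ℂ Λ Λ : ℂ) = 1)
    (hEpΛ : ∀ i, Ep i Λ = 0)
    (hHΛ : ∀ i, H i Λ = (lam i : ℂ) • Λ) :
    (inner ℂ (([0, 0, 1] : List (Fin 2)).foldr (fun j y => Em j y) Λ)
        (([0, 0, 1] : List (Fin 2)).foldr (fun j y => Em j y) Λ) : ℂ) = 12 := by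
  simp only [List.foldr]
  set v1 : V := Em 1 Λ with hv1
  set v2 : V := Em 0 v1 with hv2
  have hcomm : ∀ (i j : Fin 2) (v : V),
      Ep i (Em j v) = Em j (Ep i v) + (if i = j then H i v else 0) := by
    intro i j v
    have h := LinearMap.congr_fun (hEpEm i j) v
    simp only [LinearMap.sub_apply, LinearMap.comp_apply] at h
    by_cases hij : i = j
    · simp only [hij, if_true] at h ⊢
      exact sub_eq_iff_eq_add'.mp h
    · simp only [hij, if_false, LinearMap.zero_apply] at h ⊢
      rw [add_zero]
      exact sub_eq_zero.mp h
  have hHcomm : ∀ (i j : Fin 2) (v : V),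
      H i (Em j v) = Em j (H i v) + (-(A j i) : ℂ) • Em j v := by
    intro i j v
    have h := LinearMap.congr_fun (hHEm i j) v
    simp only [LinearMap.sub_apply, LinearMap.comp_apply, LinearMap.smul_apply] at h
    exact sub_eq_iff_eq_add'.mp h
  have hH0Λ : H 0 Λ = 0 := by rw [hHΛ, hlam0]; simp
  have hH1Λ : H 1 Λ = Λ := by rw [hHΛ, hlam1]; simp
  have hEp1v1 : Ep 1 v1 = Λ := by
    rw [hv1, hcomm 1 1 Λ, hEpΛ, map_zero, hH1Λ]; simp
  have hEp0v1 : Ep 0 v1 = 0 := by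
    rw [hv1, hcomm 0 1 Λ, hEpΛ, map_zero]; simp
  have hH0v1 : H 0 v1 = (3 : ℂ) • v1 := by
    rw [hv1, hHcomm 0 1 Λ, hH0Λ, map_zero, hA10]; norm_num
  have hEp0v2 : Ep 0 v2 = (3 : ℂ) • v1 := by
    rw [hv2, hcomm 0 0 v1, hEp0v1, map_zero, hH0v1]; simp
  have hH0v2 : H 0 v2 = v2 := by
    rw [hv2, hHcomm 0 0 v1, hH0v1, map_smul, hA00]
    push_cast
    module
  have hEp0v3 : Ep 0 (Em 0 v2) = (4 : ℂ) • v2 := by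
    rw [hcomm 0 0 v2, hEp0v2, map_smul, hH0v2, hv2]
    simp only [if_true]
    module
  have h1 : (inner ℂ v1 v1 : ℂ) = 1 := by
    rw [hv1, ← hadj 1 v1 Λ, hEp1v1, hΛnorm]
  have h2 : (inner ℂ v2 v2 : ℂ) = 3 := by
    rw [hv2, ← hadj 0 v2 v1, hEp0v2, inner_smul_left, h1]
    rw [mul_one, Complex.conj_ofNat]
  calc (inner ℂ (Em 0 v2) (Em 0 v2) : ℂ)
      = inner ℂ (Ep 0 (Em 0 v2)) v2 := (hadj 0 (Em 0 v2) v2).symm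
    _ = 12 := by rw [hEp0v3, inner_smul_left, h2, Complex.conj_ofNat]; norm_num
end

section
/- G₂ computation (Appendix A, the state of weight (−3,2)): In the G₂ specialization, ⟪v([0, 0, 0, 1]), v([0, 0, 0, 1])⟫ = 36; that is, the state E⁻₁E⁻₁E⁻₁E⁻₂Λ of level 4 has squared norm 36. -/
theorem stmt15 {V : Type*} [NormedAddCommGroup V] [InnerProductSpace ℂ V]
    (A : Fin 2 → Fin 2 → ℤ)
    (hA00 : A 0 0 = 2) (hA01 : A 0 1 = -1) (hA10 : A 1 0 = -3) (hA11 : A 1 1 = 2)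
    (Ep Em H : Fin 2 → (V →ₗ[ℂ] V))
    (hEpEm : ∀ i j, Ep i ∘ₗ Em j - Em j ∘ₗ Ep i = if i = j then H i else 0)
    (hHEp : ∀ i j, H i ∘ₗ Ep j - Ep j ∘ₗ H i = (A j i : ℂ) • Ep j)
    (hHEm : ∀ i j, H i ∘ₗ Em j - Em j ∘ₗ H i = (-(A j i) : ℂ) • Em j)
    (hHH : ∀ i j, H i ∘ₗ H j - H j ∘ₗ H i = 0)
    (hadj : ∀ i (x y : V), (inner ℂ (Ep i x) y : ℂ) = inner ℂ x (Em i y))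
    (lam : Fin 2 → ℤ) (hlam0 : lam 0 = 0) (hlam1 : lam 1 = 1)
    (Λ : V)
    (hΛnorm : (inner ℂ Λ Λ : ℂ) = 1)
    (hEpΛ : ∀ i, Ep i Λ = 0)
    (hHΛ : ∀ i, H i Λ = (lam i : ℂ) • Λ) :
    (inner ℂ (([0, 0, 0, 1] : List (Fin 2)).foldr (fun j y => Em j y) Λ)
        (([0, 0, 0, 1] : List (Fin 2)).foldr (fun j y => Em j y) Λ) : ℂ) = 36 := by
  have cEpEm : ∀ i j (v : V), Ep i (Em j v) = Em j (Ep i v) + (if i = j then H i v else 0) := by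
    intro i j v
    have h := LinearMap.congr_fun (hEpEm i j) v
    simp only [LinearMap.sub_apply, LinearMap.comp_apply] at h
    rcases eq_or_ne i j with rfl | hij
    · simp only [if_pos rfl, ↓reduceIte] at h ⊢; linear_combination (norm := abel) h
    · simp only [if_neg hij, LinearMap.zero_apply] at h ⊢
      linear_combination (norm := abel) h
  have cHEm : ∀ i j (v : V), H i (Em j v) = Em j (H i v) + (-(A j i) : ℂ) • Em j v := by
    intro i j v
    have h := LinearMap.congr_fun (hHEm i j) v
    simp only [LinearMap.sub_apply, LinearMap.comp_apply, LinearMap.smul_apply] at h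
    linear_combination (norm := abel) h
  set w1 := Em 1 Λ with hw1
  set w2 := Em 0 w1 with hw2
  set w3 := Em 0 w2 with hw3
  set w4 := Em 0 w3 with hw4
  have hH0Λ : H 0 Λ = 0 := by rw [hHΛ, hlam0]; simp
  have hH1Λ : H 1 Λ = Λ := by rw [hHΛ, hlam1]; simp
  have hH0w1 : H 0 w1 = (3 : ℂ) • w1 := by
    have := cHEm 0 1 Λ
    rw [hH0Λ, hA10] at this
    simpa using this
  have hH1w1 : H 1 w1 = -w1 := by
    have := cHEm 1 1 Λ
    rw [hH1Λ, hA11] at this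
    rw [this]
    push_cast
    rw [← hw1]
    module
  have hH0w2 : H 0 w2 = w2 := by
    have := cHEm 0 0 w1
    rw [hH0w1, hA00, map_smul] at this
    rw [this, ← hw2]
    push_cast
    module
  have hH0w3 : H 0 w3 = -w3 := by
    have := cHEm 0 0 w2
    rw [hH0w2, hA00] at this
    rw [this, ← hw3]
    push_cast
    module
  have hEp0w1 : Ep 0 w1 = 0 := by
    have := cEpEm 0 1 Λ
    rw [hEpΛ 0, map_zero] at this
    simpa using this
  have hEp1w1 : Ep 1 w1 = Λ := by
    have := cEpEm 1 1 Λ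
    rw [hEpΛ 1, map_zero, hH1Λ] at this
    simpa using this
  have hEp0w2 : Ep 0 w2 = (3 : ℂ) • w1 := by
    have := cEpEm 0 0 w1
    rw [hEp0w1, map_zero, hH0w1] at this
    simpa using this
  have hEp0w3 : Ep 0 w3 = (4 : ℂ) • w2 := by
    have h := cEpEm 0 0 w2
    rw [if_pos rfl, hEp0w2, map_smul, hH0w2, ← hw2] at h
    rw [h]; module
  have hEp0w4 : Ep 0 w4 = (3 : ℂ) • w3 := by
    have h := cEpEm 0 0 w3
    rw [if_pos rfl, hEp0w3, map_smul, hH0w3, ← hw3] at h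
    rw [h]; module
  have i1 : (inner ℂ w1 w1 : ℂ) = 1 := by
    rw [hw1, ← hadj 1 w1 Λ, hEp1w1, hΛnorm]
  have i2 : (inner ℂ w2 w2 : ℂ) = 3 := by
    rw [hw2, ← hadj 0 w2 w1, hEp0w2, inner_smul_left, i1]
    norm_num [Complex.conj_ofNat]
  have i3 : (inner ℂ w3 w3 : ℂ) = 12 := by
    rw [hw3, ← hadj 0 w3 w2, hEp0w3, inner_smul_left, i2]
    norm_num [Complex.conj_ofNat]
  show (inner ℂ w4 w4 : ℂ) = 36
  rw [hw4, ← hadj 0 w4 w3, hEp0w4, inner_smul_left, i3]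
  norm_num [Complex.conj_ofNat]
end
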